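/- arXiv:2502.00823 — 10 statements merged into one kernel-verified Lean document; each statement's English description precedes it below -/
import Mathlib

section
/- Let N ≥ 2, let T ≥ 1 and let 0 < δ ≤ 2^{−(T+1)}. Let E be the N×N complex matrix with entry 1 in position (0,0) and 0 elsewhere. Then there exist functions v_t : {−1,1}^{t−1} → ℝ (t = 1,…,T) such that for every sign sequence ε ∈ {−1,1}^T there exists an N-dimensional density matrix ρ of rank one satisfying ε_t · (Re Tr(Eρ) − v_t(ε_1,…,ε_{t−1})) ≥ δ for all t ∈ {1,…,T}. In particular, the class of all N-dimensional density matrices δ-shatters sequentially a depth-T tree all of whose measurement labels equal the single fixed measurement E, so its sequential fat-shattering dimension against {E} is Ω(log_2(1/δ)). -/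
open ComplexOrder

lemma exists_pure_state (N : ℕ) (hN : 2 ≤ N) (p : ℝ) (hp0 : 0 < p) (hp1 : p ≤ 1) :
    ∃ ρ : Matrix (Fin N) (Fin N) ℂ,
      ρ.PosSemidef ∧ ρ.trace = 1 ∧ ρ.rank = 1 ∧
      ρ ⟨0, by omega⟩ ⟨0, by omega⟩ = (p : ℂ) := by
  set ψ : Fin N → ℂ := fun i =>
    if i.1 = 0 then ((Real.sqrt p : ℝ) : ℂ)
    else if i.1 = 1 then ((Real.sqrt (1 - p) : ℝ) : ℂ) else 0 with hψ
  set A : Matrix (Fin N) (Fin 1) ℂ := fun i _ => ψ i with hA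
  have hρ : ∀ i j, (A * A.conjTranspose) i j = ψ i * star (ψ j) := by
    intro i j
    rw [Matrix.mul_apply]
    simp only [Matrix.conjTranspose_apply]
    simp [hA]
  refine ⟨A * A.conjTranspose, Matrix.posSemidef_self_mul_conjTranspose A, ?_, ?_, ?_⟩
  · -- trace = 1
    have i0 : Fin N := ⟨0, by omega⟩
    rw [Matrix.trace]
    have hdiag : ∀ i : Fin N, Matrix.diag (A * A.conjTranspose) i =
        (if i = (⟨0, by omega⟩ : Fin N) then (p : ℂ) else 0) +
        (if i = (⟨1, by omega⟩ : Fin N) then (((1 - p : ℝ)) : ℂ) else 0) := by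
      intro i
      simp only [Matrix.diag_apply, hρ, hψ, Fin.ext_iff]
      split_ifs <;>
        simp_all [← Complex.ofReal_mul, Real.mul_self_sqrt, hp0.le, sub_nonneg.mpr hp1]
    rw [Finset.sum_congr rfl (fun i _ => hdiag i), Finset.sum_add_distrib,
      Finset.sum_ite_eq' Finset.univ (⟨0, by omega⟩ : Fin N) (fun _ => (p : ℂ)),
      Finset.sum_ite_eq' Finset.univ (⟨1, by omega⟩ : Fin N) (fun _ => (((1 - p : ℝ)) : ℂ))]
    simp only [Finset.mem_univ, if_pos]
    push_cast; ring
  · -- rank = 1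
    have hra : (A * A.conjTranspose).rank = A.rank := Matrix.rank_self_mul_conjTranspose A
    have h1 : A.rank ≤ 1 := by simpa using Matrix.rank_le_card_width A
    have h0 : 0 < A.rank := by
      rw [Matrix.rank]
      have hmem : ψ ∈ LinearMap.range A.mulVecLin :=
        ⟨fun _ => 1, by ext i; simp only [Matrix.mulVecLin_apply, Matrix.mulVec, dotProduct]; simp [hA]⟩
      have hne : ψ ≠ 0 := by
        intro h
        have h2 := congrFun h ⟨0, by omega⟩
        simp [hψ, Real.sqrt_eq_zero hp0.le] at h2
        exact hp0.ne h2.symm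
      haveI : Nontrivial (LinearMap.range A.mulVecLin) :=
        nontrivial_of_ne ⟨ψ, hmem⟩ 0 (by simp [Subtype.ext_iff, hne])
      exact Module.finrank_pos
    omega
  · rw [hρ]
    simp [hψ, ← Complex.ofReal_mul, Real.mul_self_sqrt hp0.le]


lemma geo_sum (a b : ℕ) (h : a ≤ b) :
    ∑ s ∈ Finset.Ico a b, ((2:ℝ)^(s+2))⁻¹ = ((2:ℝ)^(a+1))⁻¹ - ((2:ℝ)^(b+1))⁻¹ := by
  induction b with
  | zero =>
    have : a = 0 := by omega
    subst this; simp
  | succ b ih =>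
    rcases Nat.lt_or_ge a (b+1) with hb | hb
    · have hab : a ≤ b := by omega
      rw [Finset.sum_Ico_succ_top hab, ih hab]
      have h2 : (2:ℝ)^(b+2) = 2 * 2^(b+1) := by ring
      rw [h2]
      have : (2:ℝ)^(b+1) ≠ 0 := by positivity
      field_simp
      ring
    · have : a = b + 1 := by omega
      subst this; simp


lemma trace_E_mul (N : ℕ) (hN : 2 ≤ N) (E ρ : Matrix (Fin N) (Fin N) ℂ)
    (hE : E = fun i j => if i.1 = 0 ∧ j.1 = 0 then 1 else 0) :
    Matrix.trace (E * ρ) = ρ ⟨0, by omega⟩ ⟨0, by omega⟩ := by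
  have hEe : ∀ i j : Fin N, E i j = if i.1 = 0 ∧ j.1 = 0 then 1 else 0 := by
    intro i j; rw [hE]
  rw [Matrix.trace]
  have hdiag : ∀ i : Fin N, Matrix.diag (E * ρ) i =
      if i = (⟨0, by omega⟩ : Fin N) then ρ ⟨0, by omega⟩ ⟨0, by omega⟩ else 0 := by
    intro i
    simp only [Matrix.diag_apply, Matrix.mul_apply, hEe]
    rcases eq_or_ne i (⟨0, by omega⟩ : Fin N) with h | h
    · subst h
      rw [if_pos rfl, Finset.sum_eq_single (⟨0, by omega⟩ : Fin N)]
      · simp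
      · intro k _ hk
        have : k.1 ≠ 0 := by
          intro h0; exact hk (Fin.ext h0)
        simp [this]
      · simp
    · rw [if_neg h]
      have : i.1 ≠ 0 := by
        intro h0; exact h (Fin.ext h0)
      apply Finset.sum_eq_zero
      intro k _
      simp [this]
  rw [Finset.sum_congr rfl (fun i _ => hdiag i),
    Finset.sum_ite_eq' Finset.univ (⟨0, by omega⟩ : Fin N)
      (fun _ => ρ ⟨0, by omega⟩ ⟨0, by omega⟩)]
  simp



/-- For N ≥ 2, T ≥ 1, 0 < δ ≤ 2^{−(T+1)}, and the fixed measurement E with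
    entry 1 at (0,0) and 0 elsewhere, there are witness functions v_t : {−1,1}^{t−1} → ℝ such
    that every sign sequence ε ∈ {−1,1}^T is realized, with margin δ, by a rank-one density
    matrix ρ: ε_t (Re Tr(Eρ) − v_t(ε_1,…,ε_{t−1})) ≥ δ for all t. -/
theorem single_measurement_shattering (N T : ℕ) (hN : 2 ≤ N) (hT : 1 ≤ T)
    (δ : ℝ) (hδ0 : 0 < δ) (hδ : δ ≤ ((2 : ℝ) ^ (T + 1))⁻¹)
    (E : Matrix (Fin N) (Fin N) ℂ)
    (hE : E = fun i j => if i.1 = 0 ∧ j.1 = 0 then 1 else 0) :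
    ∃ v : (t : Fin T) → (Fin t.1 → ℝ) → ℝ,
      ∀ ε : Fin T → ℝ, (∀ t, ε t = 1 ∨ ε t = -1) →
        ∃ ρ : Matrix (Fin N) (Fin N) ℂ,
          ρ.PosSemidef ∧ ρ.trace = 1 ∧ ρ.rank = 1 ∧
          ∀ t : Fin T,
            ε t * ((Matrix.trace (E * ρ)).re - v t (fun s => ε ⟨s.1, s.2.trans t.2⟩)) ≥ δ := by
  refine ⟨fun t e => 1/2 + ∑ s : Fin t.1, e s * ((2:ℝ)^(s.1+2))⁻¹, ?_⟩
  intro ε hε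
  set F : ℕ → ℝ := fun s => if h : s < T then ε ⟨s, h⟩ * ((2:ℝ)^(s+2))⁻¹ else 0 with hF
  set p : ℝ := 1/2 + ∑ s ∈ Finset.range T, F s with hp
  have habs : ∀ t : Fin T, |ε t| = 1 := by
    intro t; rcases hε t with h | h <;> simp [h]
  have hFabs : ∀ s, s < T → |F s| = ((2:ℝ)^(s+2))⁻¹ := by
    intro s hs
    simp only [hF, dif_pos hs]
    rw [abs_mul, habs, one_mul, abs_of_nonneg (by positivity)]
  have hIcoAbs : ∀ a, a ≤ T → ∑ s ∈ Finset.Ico a T, |F s| =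
      ((2:ℝ)^(a+1))⁻¹ - ((2:ℝ)^(T+1))⁻¹ := by
    intro a ha
    rw [Finset.sum_congr rfl (fun s hs => hFabs s (Finset.mem_Ico.mp hs).2)]
    exact geo_sum a T ha
  have hpow : (0:ℝ) < ((2:ℝ)^(T+1))⁻¹ := by positivity
  have hsum_bound : |∑ s ∈ Finset.range T, F s| ≤ 1/2 - ((2:ℝ)^(T+1))⁻¹ := by
    calc |∑ s ∈ Finset.range T, F s| ≤ ∑ s ∈ Finset.range T, |F s| :=
          Finset.abs_sum_le_sum_abs _ _
      _ = ((2:ℝ)^(0+1))⁻¹ - ((2:ℝ)^(T+1))⁻¹ := by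
          rw [Finset.range_eq_Ico]; exact hIcoAbs 0 (by omega)
      _ = 1/2 - ((2:ℝ)^(T+1))⁻¹ := by norm_num
  have hb := abs_le.mp hsum_bound
  have hp0 : 0 < p := by rw [hp]; linarith
  have hp1 : p ≤ 1 := by rw [hp]; linarith
  obtain ⟨ρ, hPSD, htr, hrk, hent⟩ := exists_pure_state N hN p hp0 hp1
  refine ⟨ρ, hPSD, htr, hrk, ?_⟩
  have htrE : (Matrix.trace (E * ρ)).re = p := by
    rw [trace_E_mul N hN E ρ hE, hent, Complex.ofReal_re]
  intro t
  rw [htrE]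
  have hv : (∑ s : Fin t.1, ε ⟨s.1, s.2.trans t.2⟩ * ((2:ℝ)^(s.1+2))⁻¹)
      = ∑ s ∈ Finset.range t.1, F s := by
    rw [← Fin.sum_univ_eq_sum_range F t.1]
    apply Finset.sum_congr rfl
    intro s _
    simp only [hF, dif_pos (s.2.trans t.2)]
  have hsplit : p - (1/2 + ∑ s ∈ Finset.range t.1, F s) = ∑ s ∈ Finset.Ico t.1 T, F s := by
    rw [hp, Finset.sum_Ico_eq_sub F t.2.le]
    ring
  have hkey : ε t * (∑ s ∈ Finset.Ico t.1 T, F s) ≥ ((2:ℝ)^(T+1))⁻¹ := by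
    rw [Finset.sum_eq_sum_Ico_succ_bot t.2 F]
    have hFt : ε t * F t.1 = ((2:ℝ)^(t.1+2))⁻¹ := by
      simp only [hF, dif_pos t.2, Fin.eta]
      have : ε t * ε t = 1 := by rcases hε t with h | h <;> rw [h] <;> norm_num
      rw [← mul_assoc, this, one_mul]
    have hrest : ε t * (∑ s ∈ Finset.Ico (t.1+1) T, F s) ≥
        -(((2:ℝ)^(t.1+1+1))⁻¹ - ((2:ℝ)^(T+1))⁻¹) := by
      have h1 : |ε t * (∑ s ∈ Finset.Ico (t.1+1) T, F s)| ≤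
          ((2:ℝ)^(t.1+1+1))⁻¹ - ((2:ℝ)^(T+1))⁻¹ := by
        rw [abs_mul, habs, one_mul]
        calc |∑ s ∈ Finset.Ico (t.1+1) T, F s| ≤ ∑ s ∈ Finset.Ico (t.1+1) T, |F s| :=
              Finset.abs_sum_le_sum_abs _ _
          _ = ((2:ℝ)^(t.1+1+1))⁻¹ - ((2:ℝ)^(T+1))⁻¹ := hIcoAbs (t.1+1) t.2
      linarith [(abs_le.mp h1).1]
    have ht2 : ((2:ℝ)^(t.1+1+1))⁻¹ = ((2:ℝ)^(t.1+2))⁻¹ := by norm_num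
    rw [mul_add, hFt]
    rw [ht2] at hrest
    linarith
  calc δ ≤ ((2:ℝ)^(T+1))⁻¹ := hδ
    _ ≤ ε t * (∑ s ∈ Finset.Ico t.1 T, F s) := hkey
    _ = ε t * (p - (1/2 + ∑ s : Fin t.1, ε ⟨s.1, s.2.trans t.2⟩ * ((2:ℝ)^(s.1+2))⁻¹)) := by
        rw [hv, hsplit]
end

section
/- Let N ≥ 2, let 1 ≤ T ≤ N−1 and let 0 < δ ≤ 1/(2(T+1)). For every sign sequence ε ∈ {−1,1}^T define S(ε) = {t ∈ {1,…,T} : ε_t = 1} and K = |S(ε)|, and let ψ(ε) ∈ ℂ^N be the uniform superposition ψ(ε) = (1/√(K+1)) (Σ_{t∈S(ε)} e_{t−1} + e_{N−1}). Then for every ε ∈ {−1,1}^T and every t ∈ {1,…,T}: ε_t · (|⟨e_{t−1}, ψ(ε)⟩|² − 1/(2(T+1))) ≥ δ. Consequently, the class of uniform-superposition pure states δ-shatters sequentially (with constant witness value 1/(2(T+1))) the depth-T sequence of Von Neumann measurements e_0e_0*, …, e_{T−1}e_{T−1}*, so its sequential fat-shattering dimension at scale δ against Von Neumann measurements is Ω(min(1/δ,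 N)). -/
/-- For N ≥ 2, 1 ≤ T ≤ N−1 and 0 < δ ≤ 1/(2(T+1)), the explicit uniform
    superposition ψ(ε) = (1/√(K+1)) (Σ_{t : ε_t = 1} e_{t−1} + e_{N−1}) (K the number of +1
    signs) is a unit vector and satisfies, for every t,
    ε_t (|⟨e_{t−1}, ψ(ε)⟩|² − 1/(2(T+1))) ≥ δ. -/
theorem uniform_superposition_shattering (N T : ℕ) (hN : 2 ≤ N) (hT1 : 1 ≤ T)
    (hTN : T ≤ N - 1) (δ : ℝ) (hδ0 : 0 < δ) (hδ : δ ≤ 1 / (2 * ((T : ℝ) + 1))) :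
    ∀ ε : Fin T → ℝ, (∀ t, ε t = 1 ∨ ε t = -1) →
      ∀ K : ℕ, K = (Finset.univ.filter (fun s : Fin T => ε s = 1)).card →
        ∀ ψ : Fin N → ℂ,
          (∀ i : Fin N, ψ i =
            if i.1 = N - 1 then ((Real.sqrt (K + 1) : ℝ) : ℂ)⁻¹
            else if h : i.1 < T then
              (if ε ⟨i.1, h⟩ = 1 then ((Real.sqrt (K + 1) : ℝ) : ℂ)⁻¹ else 0)
            else 0) →
          (∑ i, ‖ψ i‖ ^ 2 = 1) ∧
          ∀ t : Fin T,
            ε t * (‖ψ ⟨t.1, lt_of_lt_of_le t.2 (hTN.trans (Nat.sub_le N 1))⟩‖ ^ 2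
              - 1 / (2 * ((T : ℝ) + 1))) ≥ δ := by
  classical
  intro ε hε K hK ψ hψ
  have hTN' : T < N := by omega
  have hKT : K ≤ T := by
    rw [hK]
    calc (Finset.univ.filter (fun s : Fin T => ε s = 1)).card
        ≤ (Finset.univ : Finset (Fin T)).card := Finset.card_filter_le _ _
      _ = T := by simp
  have hKpos : (0:ℝ) < (K:ℝ) + 1 := by positivity
  have hcn : ‖(((Real.sqrt (K+1) : ℝ)) : ℂ)⁻¹‖ ^ 2 = ((K:ℝ)+1)⁻¹ := by
    rw [norm_inv, Complex.norm_real, Real.norm_eq_abs,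
      abs_of_nonneg (Real.sqrt_nonneg _), inv_pow, Real.sq_sqrt hKpos.le]
  have hnorm : ∀ i : Fin N, ‖ψ i‖ ^ 2 =
      if i.1 = N - 1 ∨ ∃ h : i.1 < T, ε ⟨i.1, h⟩ = 1 then ((K:ℝ)+1)⁻¹ else 0 := by
    intro i
    rw [hψ i]
    by_cases h1 : i.1 = N - 1
    · simp [h1, hcn, Real.sq_sqrt hKpos.le]
    · by_cases h2 : i.1 < T
      · by_cases h3 : ε ⟨i.1, h2⟩ = 1
        · rw [if_neg h1, dif_pos h2, if_pos h3, if_pos (Or.inr ⟨h2, h3⟩)]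
          exact hcn
        · rw [if_neg h1, dif_pos h2, if_neg h3, if_neg]
          · simp
          · rintro (h | ⟨h, h'⟩)
            · exact h1 h
            · exact h3 h'
      · rw [if_neg h1, dif_neg h2, if_neg]
        · simp
        · rintro (h | ⟨h, h'⟩)
          · exact h1 h
          · exact h2 h
  constructor
  · -- sum of norms squared = 1
    have hcard : (Finset.univ.filter
        (fun i : Fin N => i.1 = N - 1 ∨ ∃ h : i.1 < T, ε ⟨i.1, h⟩ = 1)).card = K + 1 := by
      have hset : Finset.univ.filter
          (fun i : Fin N => i.1 = N - 1 ∨ ∃ h : i.1 < T, ε ⟨i.1, h⟩ = 1)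
          = insert ⟨N - 1, by omega⟩
            ((Finset.univ.filter (fun s : Fin T => ε s = 1)).image
              (Fin.castLE hTN'.le)) := by
        ext i
        simp only [Finset.mem_filter, Finset.mem_univ, true_and, Finset.mem_insert,
          Finset.mem_image]
        constructor
        · rintro (h | ⟨h, h'⟩)
          · left; exact Fin.ext h
          · right; exact ⟨⟨i.1, h⟩, by simpa using h', by ext; simp⟩
        · rintro (rfl | ⟨s, hs, rfl⟩)
          · left; rfl
          · right
            refine ⟨by simpa using s.2, ?_⟩
            simpa using hs
      rw [hset, Finset.card_insert_of_notMem, Finset.card_image_of_injective _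
        (Fin.castLE_injective _), ← hK]
      intro hmem
      obtain ⟨s, _, hs⟩ := Finset.mem_image.mp hmem
      have : (s : ℕ) = N - 1 := by simpa using congrArg Fin.val hs
      omega
    calc ∑ i, ‖ψ i‖ ^ 2
        = ∑ i : Fin N, (if i.1 = N - 1 ∨ ∃ h : i.1 < T, ε ⟨i.1, h⟩ = 1
            then ((K:ℝ)+1)⁻¹ else 0) := by
          exact Finset.sum_congr rfl (fun i _ => hnorm i)
      _ = (Finset.univ.filter
            (fun i : Fin N => i.1 = N - 1 ∨ ∃ h : i.1 < T, ε ⟨i.1, h⟩ = 1)).card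
            * ((K:ℝ)+1)⁻¹ := by
          rw [Finset.sum_ite, Finset.sum_const, Finset.sum_const_zero, add_zero,
            nsmul_eq_mul]
      _ = 1 := by
          rw [hcard]
          push_cast
          field_simp
  · intro t
    have htN : t.1 ≠ N - 1 := by omega
    have hval : ‖ψ ⟨t.1, lt_of_lt_of_le t.2 (hTN.trans (Nat.sub_le N 1))⟩‖ ^ 2
        = if ε t = 1 then ((K:ℝ)+1)⁻¹ else 0 := by
      rw [hnorm]
      by_cases h3 : ε t = 1
      · rw [if_pos h3, if_pos]
        exact Or.inr ⟨t.2, by simpa using h3⟩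
      · rw [if_neg h3, if_neg]
        rintro (h | ⟨h, h'⟩)
        · exact htN h
        · exact h3 (by simpa using h')
    have hTpos : (0:ℝ) < 2 * ((T:ℝ) + 1) := by positivity
    rcases hε t with h1 | h1
    · rw [hval, if_pos h1, h1, one_mul]
      have hmono : ((T:ℝ)+1)⁻¹ ≤ ((K:ℝ)+1)⁻¹ := by
        apply inv_anti₀ hKpos
        have : (K:ℝ) ≤ (T:ℝ) := by exact_mod_cast hKT
        linarith
      have : 1 / (2 * ((T:ℝ) + 1)) ≤ ((K:ℝ)+1)⁻¹ - 1 / (2 * ((T:ℝ) + 1)) := by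
        rw [one_div]
        have h2 : (2 * ((T:ℝ) + 1))⁻¹ + (2 * ((T:ℝ) + 1))⁻¹ = ((T:ℝ)+1)⁻¹ := by
          rw [mul_inv, ← two_mul, ← mul_assoc, mul_inv_cancel₀ two_ne_zero, one_mul]
        linarith
      linarith
    · rw [hval, if_neg (by rw [h1]; norm_num), h1]
      have : -1 * (0 - 1 / (2 * ((T:ℝ) + 1))) = 1 / (2 * ((T:ℝ) + 1)) := by ring
      linarith
end

section
/- Let n ≥ 1, N = 2^n, T ≥ 1CURRENT, and 0 < δ ≤ 2^{−(n+T+1)}. Set D = T(N−1) and, for t ∈ {1,…,D}, set i(t) = ⌊(t−1)/T⌋. Then there exist functions v_t : {−1,1}^{t−1} → ℝ (t = 1,…,D) such that for every sign sequence ε ∈ {−1,1}^D there exists a unit vector ψ ∈ ℂ^N satisfying ε_t · (|⟨e_{i(t)}, ψ⟩|² − v_t(ε_1,…,ε_{t−1})) ≥ δ for all t ∈ {1,…,D}. That is, the class of N-dimensional pure states δ-shatters sequentially a tree of depth T(2^n − 1) whose measurement labels are the Von Neumann measurements e_{i(t)}e_{i(t)}*. -/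
private lemma geom_aux (m : ℕ) :
    ∑ s ∈ Finset.range m, ((2:ℝ)^(s+2))⁻¹ = 2⁻¹ - ((2:ℝ)^(m+1))⁻¹ := by
  induction m with
  | zero => norm_num
  | succ m ih =>
    rw [Finset.sum_range_succ, ih]
    have h1 : (2:ℝ)^(m+1) ≠ 0 := by positivity
    have h2 : (2:ℝ)^(m+2) = 2 * (2:ℝ)^(m+1) := by ring
    field_simp [h2]
    ring

/-- For n ≥ 1, N = 2^n, T ≥ 1 and 0 < δ ≤ 2^{−(n+T+1)}, with D = T(N−1) and
    i(t) = ⌊(t−1)/T⌋ (0-based: i(t) = t/T), there are witness functions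
    v_t : {−1,1}^{t−1} → ℝ such that every sign sequence ε ∈ {−1,1}^D is realized, with margin
    δ, by a pure state ψ ∈ ℂ^N: ε_t (|⟨e_{i(t)}, ψ⟩|² − v_t(ε_1,…,ε_{t−1})) ≥ δ for all t. -/
theorem von_neumann_halving_shattering (n T N D : ℕ) (hn : 1 ≤ n) (hT : 1 ≤ T)
    (hN : N = 2 ^ n) (hD : D = T * (N - 1))
    (δ : ℝ) (hδ0 : 0 < δ) (hδ : δ ≤ ((2 : ℝ) ^ (n + T + 1))⁻¹) :
    ∃ v : (t : Fin D) → (Fin t.1 → ℝ) → ℝ,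
      ∀ ε : Fin D → ℝ, (∀ t, ε t = 1 ∨ ε t = -1) →
        ∃ ψ : Fin N → ℂ, (∑ i, ‖ψ i‖ ^ 2 = 1) ∧
          ∀ t : Fin D,
            ε t * (‖ψ ⟨t.1 / T,
                lt_of_lt_of_le
                  (Nat.div_lt_of_lt_mul (lt_of_lt_of_le t.2 (le_of_eq hD)))
                  (Nat.sub_le N 1)⟩‖ ^ 2
              - v t (fun s => ε ⟨s.1, s.2.trans t.2⟩)) ≥ δ := by
  set a : ℝ := ((2:ℝ)^n)⁻¹ with ha
  have ha0 : 0 < a := by positivity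
  refine ⟨fun t e => a * (1/2 + ∑ s : Fin (t.1 % T),
      e ⟨(t.1 / T) * T + s.1, by
        have h := Nat.div_add_mod' t.1 T
        have hs' := s.2
        have ht := t.2
        omega⟩ * ((2:ℝ)^(s.1+2))⁻¹), ?_⟩
  intro ε hε
  set ε' : ℕ → ℝ := fun m => if h : m < D then ε ⟨m, h⟩ else 1 with hε'def
  have hε'1 : ∀ m, ε' m = 1 ∨ ε' m = -1 := by
    intro m
    by_cases h : m < D
    · simpa [hε'def, h] using hε ⟨m, h⟩
    · left; simp [hε'def, h]
  have hε'abs : ∀ m, |ε' m| = 1 := by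
    intro m; rcases hε'1 m with h | h <;> simp [h]
  set p : ℕ → ℝ := fun i => a * (1/2 + ∑ s ∈ Finset.range T, ε' (i*T+s) * ((2:ℝ)^(s+2))⁻¹)
    with hpdef
  have hsum_abs : ∀ i k, k ≤ T →
      |∑ s ∈ Finset.Ico k T, ε' (i*T+s) * ((2:ℝ)^(s+2))⁻¹|
        ≤ ((2:ℝ)^(k+1))⁻¹ - ((2:ℝ)^(T+1))⁻¹ := by
    intro i k hk
    calc |∑ s ∈ Finset.Ico k T, ε' (i*T+s) * ((2:ℝ)^(s+2))⁻¹|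
        ≤ ∑ s ∈ Finset.Ico k T, |ε' (i*T+s) * ((2:ℝ)^(s+2))⁻¹| :=
          Finset.abs_sum_le_sum_abs _ _
      _ = ∑ s ∈ Finset.Ico k T, ((2:ℝ)^(s+2))⁻¹ := by
          refine Finset.sum_congr rfl fun s _ => ?_
          rw [abs_mul, hε'abs, one_mul, abs_of_nonneg (by positivity)]
      _ = (2⁻¹ - ((2:ℝ)^(T+1))⁻¹) - (2⁻¹ - ((2:ℝ)^(k+1))⁻¹) := by
          rw [← geom_aux T, ← geom_aux k,
            ← Finset.sum_range_add_sum_Ico _ hk]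
          ring
      _ = ((2:ℝ)^(k+1))⁻¹ - ((2:ℝ)^(T+1))⁻¹ := by ring
  have hTpow : (0:ℝ) < ((2:ℝ)^(T+1))⁻¹ := by positivity
  have hp_pos : ∀ i, 0 ≤ p i := by
    intro i
    have h := hsum_abs i 0 (Nat.zero_le T)
    rw [← Finset.range_eq_Ico] at h
    have h' := abs_le.mp h
    have h1 : (0:ℝ) ≤ 1/2 + ∑ s ∈ Finset.range T, ε' (i*T+s) * ((2:ℝ)^(s+2))⁻¹ := by
      have h2 : ((2:ℝ)^(0+1))⁻¹ = 1/2 := by norm_num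
      nlinarith [hTpow]
    have : p i = a * (1/2 + ∑ s ∈ Finset.range T, ε' (i*T+s) * ((2:ℝ)^(s+2))⁻¹) := by
      rw [hpdef]
    rw [this]
    exact mul_nonneg ha0.le h1
  have hp_le : ∀ i, p i ≤ a := by
    intro i
    have h := hsum_abs i 0 (Nat.zero_le T)
    rw [← Finset.range_eq_Ico] at h
    have h' := abs_le.mp h
    have h1 : 1/2 + ∑ s ∈ Finset.range T, ε' (i*T+s) * ((2:ℝ)^(s+2))⁻¹ ≤ 1 := by
      have h2 : ((2:ℝ)^(0+1))⁻¹ = 1/2 := by norm_num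
      nlinarith [hTpow]
    have hpi : p i = a * (1/2 + ∑ s ∈ Finset.range T, ε' (i*T+s) * ((2:ℝ)^(s+2))⁻¹) := by
      rw [hpdef]
    rw [hpi]
    calc a * (1/2 + ∑ s ∈ Finset.range T, ε' (i*T+s) * ((2:ℝ)^(s+2))⁻¹) ≤ a * 1 :=
          mul_le_mul_of_nonneg_left h1 ha0.le
      _ = a := mul_one a
  have hsum_p : ∑ j ∈ Finset.range (N-1), p j ≤ 1 := by
    calc ∑ j ∈ Finset.range (N-1), p j ≤ ∑ j ∈ Finset.range (N-1), a :=
          Finset.sum_le_sum fun j _ => hp_le j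
      _ = ((N-1 : ℕ) : ℝ) * a := by rw [Finset.sum_const, Finset.card_range, nsmul_eq_mul]
      _ ≤ ((2^n : ℕ) : ℝ) * a := by
          have : ((N-1:ℕ):ℝ) ≤ ((2^n : ℕ):ℝ) := by
            have : N - 1 ≤ 2^n := by omega
            exact_mod_cast this
          exact mul_le_mul_of_nonneg_right this ha0.le
      _ = 1 := by
          rw [ha]; push_cast
          field_simp
  have hrem : 0 ≤ 1 - ∑ j ∈ Finset.range (N-1), p j := by linarith
  set r : ℝ := 1 - ∑ j ∈ Finset.range (N-1), p j with hr
  refine ⟨fun i => if i.1 < N - 1 then ((Real.sqrt (p i.1) : ℝ) : ℂ)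
      else ((Real.sqrt r : ℝ) : ℂ), ?_, ?_⟩
  · -- normalization
    have hN1 : N - 1 + 1 = N := by
      have : 1 ≤ N := by rw [hN]; exact Nat.one_le_two_pow
      omega
    calc (∑ i : Fin N, ‖(if i.1 < N - 1 then ((Real.sqrt (p i.1) : ℝ) : ℂ)
            else ((Real.sqrt r : ℝ) : ℂ))‖^2)
        = ∑ i : Fin N, (if i.1 < N - 1 then p i.1 else r) := by
          refine Finset.sum_congr rfl fun i _ => ?_
          by_cases h : i.1 < N - 1 <;>
            simp [h, Complex.norm_real, sq_abs, Real.sq_sqrt, hp_pos, hrem, hr, hsum_p]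
      _ = ∑ i ∈ Finset.range N, (if i < N - 1 then p i else r) := by
          rw [Fin.sum_univ_eq_sum_range (fun j => if j < N - 1 then p j else r) N]
      _ = 1 := by
          obtain ⟨M, hM⟩ : ∃ M, N = M + 1 := ⟨N - 1, by omega⟩
          have hM' : N - 1 = M := by omega
          rw [hM'] at hr ⊢
          rw [hM, Finset.sum_range_succ]
          have heq : ∑ i ∈ Finset.range M, (if i < M then p i else r)
              = ∑ i ∈ Finset.range M, p i := by
            refine Finset.sum_congr rfl fun i hi => ?_
            rw [if_pos (Finset.mem_range.mp hi)]
          rw [heq, if_neg (lt_irrefl _), hr]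
          ring
  · -- the shattering inequality
    intro t
    beta_reduce
    set i : ℕ := t.1 / T with hi
    set k : ℕ := t.1 % T with hk
    have hkT : k < T := Nat.mod_lt _ (by omega)
    have hik : i * T + k = t.1 := by
      rw [hi, hk]; exact Nat.div_add_mod' t.1 T
    have hiN : i < N - 1 :=
      Nat.div_lt_of_lt_mul (lt_of_lt_of_le t.2 (le_of_eq hD))
    rw [if_pos hiN]
    have hnorm : ‖((Real.sqrt (p i) : ℝ) : ℂ)‖^2 = p i := by
      simp [Complex.norm_real, sq_abs, Real.sq_sqrt, hp_pos i]
    rw [hnorm]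
    -- identify the applied witness function
    have hv : (∑ s : Fin k, ε ⟨i * T + s.1, by
          have h := Nat.div_add_mod' t.1 T
          have hs' := s.2
          have ht := t.2
          omega⟩ * ((2:ℝ)^(s.1+2))⁻¹)
        = ∑ s ∈ Finset.range k, ε' (i*T+s) * ((2:ℝ)^(s+2))⁻¹ := by
      rw [← Fin.sum_univ_eq_sum_range (fun s => ε' (i*T+s) * ((2:ℝ)^(s+2))⁻¹) k]
      refine Finset.sum_congr rfl fun s _ => ?_
      have hlt : i*T + s.1 < D := by
        have h := Nat.div_add_mod' t.1 T
        have hs' := s.2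
        have ht := t.2
        omega
      rw [hε'def]
      simp only [dif_pos hlt]
    rw [hv]
    -- split the sum
    have hεt : ε' (i*T+k) = ε t := by
      rw [hik, hε'def]
      simp [t.2]
    have hsplit : ∑ s ∈ Finset.range T, ε' (i*T+s) * ((2:ℝ)^(s+2))⁻¹
        = (∑ s ∈ Finset.range k, ε' (i*T+s) * ((2:ℝ)^(s+2))⁻¹)
          + (ε t * ((2:ℝ)^(k+2))⁻¹
            + ∑ s ∈ Finset.Ico (k+1) T, ε' (i*T+s) * ((2:ℝ)^(s+2))⁻¹) := by
      rw [← Finset.sum_range_add_sum_Ico _ hkT.le]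
      congr 1
      rw [Finset.sum_eq_sum_Ico_succ_bot hkT, hεt]
    set S : ℝ := ∑ s ∈ Finset.Ico (k+1) T, ε' (i*T+s) * ((2:ℝ)^(s+2))⁻¹ with hS
    have hSb : |S| ≤ ((2:ℝ)^(k+2))⁻¹ - ((2:ℝ)^(T+1))⁻¹ := by
      have h := hsum_abs i (k+1) hkT
      have : k + 1 + 1 = k + 2 := by omega
      rwa [this] at h
    have hkey : p i - a * (1/2 + ∑ s ∈ Finset.range k, ε' (i*T+s) * ((2:ℝ)^(s+2))⁻¹)
        = a * (ε t * ((2:ℝ)^(k+2))⁻¹ + S) := by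
      have hpi : p i = a * (1/2 + ∑ s ∈ Finset.range T, ε' (i*T+s) * ((2:ℝ)^(s+2))⁻¹) := by
        rw [hpdef]
      rw [hpi, hsplit]
      ring
    rw [hkey]
    have hεt2 : ε t * ε t = 1 := by rcases hε t with h|h <;> rw [h] <;> norm_num
    have hεtS : -(((2:ℝ)^(k+2))⁻¹ - ((2:ℝ)^(T+1))⁻¹) ≤ ε t * S := by
      have h1 : -|S| ≤ ε t * S := by
        rcases hε t with h|h <;> rw [h]
        · simpa using neg_abs_le S
        · have : (-1 : ℝ) * S = -S := by ring
          rw [this]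
          simpa using le_abs_self S
      linarith
    have hfin : a * ((2:ℝ)^(T+1))⁻¹ = ((2:ℝ)^(n+T+1))⁻¹ := by
      rw [ha, ← mul_inv, ← pow_add, add_assoc]
    have hexp : ε t * (a * (ε t * ((2:ℝ)^(k+2))⁻¹ + S))
        = a * ((2:ℝ)^(k+2))⁻¹ * (ε t * ε t) + a * (ε t * S) := by ring
    rw [ge_iff_le, hexp, hεt2]
    have h2 : a * ((2:ℝ)^(T+1))⁻¹ - a * ((2:ℝ)^(k+2))⁻¹ ≤ a * (ε t * S) := by
      have h3 := mul_le_mul_of_nonneg_left hεtS ha0.le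
      nlinarith
    nlinarith [hδ, hfin, h2]
end

section
/- For every η with 0 < η < 1 there exist a constant c > 0 and n₀ ∈ ℕ such that for every n ≥ n₀ the following holds with N = 2^n and δ = 2^{−n/η}: there exist a natural number D ≥ c · n · δ^{−η}, a sequence of Von Neumann measurements x_1,…,x_D with each x_t ∈ {e_ie_i* : 0 ≤ i ≤ N−1}, and functions v_t : {−1,1}^{t−1} → ℝ (t = 1,…,D), such that for every sign sequence ε ∈ {−1,1}^D there exists a unit vector ψ ∈ ℂ^N with ε_t · (Re⟨ψ, x_tψ⟩ − v_t(ε_1,…,ε_{t−1})) ≥ δ for all t ∈ {1,…,D}. In words: the sequential fat-shattering dimension of n-qubit pure states against Von Neumann measurements at scale δ = 2^{−n/η} is Ω(n/δ^η) for every η < 1. -/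
open Matrix


lemma proj_accept {N : ℕ} (i : Fin N) (ψ : Fin N → ℂ) :
    star ψ ⬝ᵥ (Matrix.mulVec (fun a b => if a = i ∧ b = i then (1:ℂ) else 0) ψ)
      = star (ψ i) * ψ i := by
  simp [Matrix.mulVec, dotProduct, ite_and]

lemma aux_reflect (d k : ℕ) (hk : k ≤ d) :
    ∑ j ∈ Finset.Ico k d, (2:ℝ)^(d-1-j) = 2^(d-k) - 1 := by
  rcases Nat.eq_zero_or_pos d with h | h
  · subst h; interval_cases k; simp
  · rw [show d = (d-1)+1 by omega] at hk ⊢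
    simp only [Nat.add_sub_cancel]
    rw [Finset.sum_Ico_reflect (fun j => (2:ℝ)^j) k (le_refl _)]
    simp only [Nat.sub_self]
    rw [show Finset.Ico 0 (d-1+1-k) = Finset.range (d-1+1-k) from by rw [Finset.range_eq_Ico]]
    rw [geom_sum_eq (by norm_num)]
    norm_num

-- the combinatorial core
lemma core (N d : ℕ) (δ : ℝ) (hδpos : 0 < δ) (hdpos : 0 < d) (hN2 : 2 ≤ N)
    (hkey : (N:ℝ) * (2*δ*2^d) ≤ 1) :
    ∃ x : Fin ((N-1)*d) → Matrix (Fin N) (Fin N) ℂ,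
      (∀ t : Fin ((N-1)*d), ∃ i : Fin N,
        x t = fun a b => if a = i ∧ b = i then 1 else 0) ∧
      ∃ v : (t : Fin ((N-1)*d)) → (Fin t.1 → ℝ) → ℝ,
        ∀ ε : Fin ((N-1)*d) → ℝ, (∀ t, ε t = 1 ∨ ε t = -1) →
          ∃ ψ : Fin N → ℂ, (∑ i, ‖ψ i‖ ^ 2 = 1) ∧
            ∀ t : Fin ((N-1)*d),
              ε t * ((star ψ ⬝ᵥ (x t).mulVec ψ).re
                - v t (fun s => ε ⟨s.1, s.2.trans t.2⟩)) ≥ δ := by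
  classical
  have hdiv : ∀ t : Fin ((N-1)*d), t.1 / d < N - 1 :=
    fun t => (Nat.div_lt_iff_lt_mul hdpos).mpr t.2
  set idx : Fin ((N-1)*d) → Fin N := fun t => ⟨t.1/d + 1, by have := hdiv t; omega⟩ with hidx
  refine ⟨fun t => fun a b => if a = idx t ∧ b = idx t then 1 else 0,
    fun t => ⟨idx t, rfl⟩, ?_⟩
  refine ⟨fun t h => (∑ j' ∈ Finset.range (t.1 % d),
      (if (if hs : (t.1/d)*d + j' < t.1 then h ⟨(t.1/d)*d + j', hs⟩ else 0) = 1 then (1:ℝ) else 0)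
        * (2*δ*2^(d-1-j')))
    + 2*δ*2^(d-1-t.1 % d) - δ, ?_⟩
  intro ε hε
  set E : ℕ → ℝ := fun s => if hs : s < (N-1)*d then ε ⟨s, hs⟩ else 1 with hE
  set P : ℕ → ℝ := fun i => ∑ j ∈ Finset.range d,
    (if E (i*d + j) = 1 then (1:ℝ) else 0) * (2*δ*2^(d-1-j)) with hP
  set S : ℝ := ∑ i ∈ Finset.range (N-1), P i with hS
  have hPnn : ∀ i, 0 ≤ P i := fun i => Finset.sum_nonneg (fun j _ =>
    mul_nonneg (by split <;> norm_num) (by positivity))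
  have hPle : ∀ i, P i ≤ 2*δ*2^d := by
    intro i
    have h1 : P i ≤ ∑ j ∈ Finset.range d, 2*δ*2^(d-1-j) := by
      refine Finset.sum_le_sum (fun j _ => ?_)
      have h2 : (0:ℝ) ≤ 2*δ*2^(d-1-j) := by positivity
      split <;> simp [h2]
    have h3 : ∑ j ∈ Finset.range d, 2*δ*2^(d-1-j) = 2*δ*((2:ℝ)^d - 1) := by
      rw [Finset.range_eq_Ico, ← Finset.mul_sum, aux_reflect d 0 (Nat.zero_le d)]
      norm_num
    have h4 : 2*δ*((2:ℝ)^d - 1) ≤ 2*δ*2^d := by nlinarith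
    linarith
  have hS1 : S ≤ 1 := by
    have h1 : S ≤ ∑ _i ∈ Finset.range (N-1), 2*δ*2^d :=
      Finset.sum_le_sum (fun i _ => hPle i)
    rw [Finset.sum_const, Finset.card_range, nsmul_eq_mul] at h1
    have h2 : ((N-1:ℕ):ℝ) ≤ (N:ℝ) := by exact_mod_cast Nat.sub_le N 1
    have h3 : (0:ℝ) ≤ 2*δ*2^d := by positivity
    nlinarith
  set ψ : Fin N → ℂ := fun a => if a.1 = 0 then ((Real.sqrt (1 - S) : ℝ) : ℂ)
    else ((Real.sqrt (P (a.1 - 1)) : ℝ) : ℂ) with hψ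
  refine ⟨ψ, ?_, ?_⟩
  · -- norm sum
    have hsq : ∀ r : ℝ, 0 ≤ r → ‖((Real.sqrt r : ℝ) : ℂ)‖^2 = r := fun r hr => by
      rw [Complex.norm_real, Real.norm_eq_abs, sq_abs, Real.sq_sqrt hr]
    have h0 := Fin.sum_univ_eq_sum_range (fun k => ‖(if k = 0 then ((Real.sqrt (1 - S) : ℝ) : ℂ)
        else ((Real.sqrt (P (k - 1)) : ℝ) : ℂ))‖ ^ 2) N
    simp only [hψ] at h0 ⊢
    rw [h0, show Finset.range N = Finset.range ((N-1)+1) from by congr 1; omega,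
      Finset.sum_range_succ']
    simp only [Nat.succ_ne_zero, if_false, if_true, eq_self_iff_true, Nat.add_sub_cancel]
    rw [Finset.sum_congr rfl (fun i _ => hsq (P i) (hPnn i)), hsq (1-S) (by linarith), ← hS]
    ring
  · intro t
    set i := t.1 / d with hi
    set j := t.1 % d with hj
    have hjd : j < d := Nat.mod_lt _ hdpos
    have htij : i*d + j = t.1 := by rw [hi, hj, mul_comm]; exact Nat.div_add_mod t.1 d
    -- acceptance probability
    have hψidx : ψ (idx t) = ((Real.sqrt (P i) : ℝ) : ℂ) := by
      simp only [hψ, hidx]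
      norm_num
      rfl
    have hacc : (star ψ ⬝ᵥ Matrix.mulVec (fun a b => if a = idx t ∧ b = idx t then (1:ℂ) else 0) ψ).re
        = P i := by
      rw [proj_accept, hψidx]
      simp only [Complex.star_def, Complex.conj_ofReal, ← Complex.ofReal_mul, Complex.ofReal_re]
      exact Real.mul_self_sqrt (hPnn i)
    rw [hacc]
    -- the v-value
    have hvv : (∑ j' ∈ Finset.range j,
        (if (if hs : i*d + j' < t.1 then ε ⟨i*d + j', hs.trans t.2⟩ else 0) = 1 then (1:ℝ) else 0)
          * (2*δ*2^(d-1-j')))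
        = ∑ j' ∈ Finset.range j,
        (if E (i*d + j') = 1 then (1:ℝ) else 0) * (2*δ*2^(d-1-j')) := by
      refine Finset.sum_congr rfl (fun j' hj' => ?_)
      have h1 : i*d + j' < t.1 :=
        htij ▸ Nat.add_lt_add_left (Finset.mem_range.mp hj') (i*d)
      rw [dif_pos h1, hE]
      simp only [dif_pos (h1.trans t.2)]
    -- split P i
    have hsplit : P i = (∑ j' ∈ Finset.range j,
          (if E (i*d + j') = 1 then (1:ℝ) else 0) * (2*δ*2^(d-1-j')))
        + ((if E (i*d + j) = 1 then (1:ℝ) else 0) * (2*δ*2^(d-1-j))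
        + ∑ j' ∈ Finset.Ico (j+1) d,
          (if E (i*d + j') = 1 then (1:ℝ) else 0) * (2*δ*2^(d-1-j'))) := by
      rw [hP]
      simp only
      rw [Finset.range_eq_Ico,
        ← Finset.sum_Ico_consecutive _ (Nat.zero_le j) hjd.le,
        Finset.sum_eq_sum_Ico_succ_bot hjd, ← Finset.range_eq_Ico]
    have hEt : E (i*d + j) = ε t := by
      rw [htij, hE]
      simp only [dif_pos t.2]
    have hIconn : 0 ≤ ∑ j' ∈ Finset.Ico (j+1) d,
        (if E (i*d + j') = 1 then (1:ℝ) else 0) * (2*δ*2^(d-1-j')) :=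
      Finset.sum_nonneg (fun j' _ => mul_nonneg (by split <;> norm_num) (by positivity))
    have hIcole : ∑ j' ∈ Finset.Ico (j+1) d,
        (if E (i*d + j') = 1 then (1:ℝ) else 0) * (2*δ*2^(d-1-j'))
        ≤ 2*δ*2^(d-1-j) - 2*δ := by
      have h1 : ∑ j' ∈ Finset.Ico (j+1) d,
          (if E (i*d + j') = 1 then (1:ℝ) else 0) * (2*δ*2^(d-1-j'))
          ≤ ∑ j' ∈ Finset.Ico (j+1) d, 2*δ*2^(d-1-j') := by
        refine Finset.sum_le_sum (fun j' _ => ?_)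
        have h2 : (0:ℝ) ≤ 2*δ*2^(d-1-j') := by positivity
        split <;> simp [h2]
      have h3 : ∑ j' ∈ Finset.Ico (j+1) d, 2*δ*2^(d-1-j')
          = 2*δ*((2:ℝ)^(d-1-j) - 1) := by
        rw [← Finset.mul_sum, aux_reflect d (j+1) hjd,
          show d - (j+1) = d - 1 - j from by omega]
      rw [h3] at h1
      nlinarith [h1]
    beta_reduce
    simp only [← hi, ← hj]
    rcases hε t with h1 | h1
    · rw [h1, hvv, one_mul]
      rw [h1] at hEt
      rw [hsplit, hEt, if_pos rfl, one_mul]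
      linarith
    · rw [h1, hvv]
      rw [h1] at hEt
      rw [hsplit, hEt, if_neg (by norm_num), zero_mul]
      linarith

/-- For every 0 < η < 1 there are c > 0 and n₀ such that for all n ≥ n₀, with
    N = 2^n and δ = 2^{−n/η}, the class of N-dimensional pure states δ-shatters sequentially
    a sequence of D ≥ c·n·δ^{−η} Von Neumann measurements (projections onto standard basis
    vectors). -/
theorem pure_states_von_neumann_sfat_lower (η : ℝ) (hη0 : 0 < η) (hη1 : η < 1) :
    ∃ c : ℝ, 0 < c ∧ ∃ n₀ : ℕ, ∀ n : ℕ, n₀ ≤ n →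
      ∀ N : ℕ, N = 2 ^ n → ∀ δ : ℝ, δ = (2 : ℝ) ^ (-(n : ℝ) / η) →
        ∃ D : ℕ, (D : ℝ) ≥ c * n * δ ^ (-η) ∧
          ∃ x : Fin D → Matrix (Fin N) (Fin N) ℂ,
            (∀ t : Fin D, ∃ i : Fin N,
              x t = fun a b => if a = i ∧ b = i then 1 else 0) ∧
            ∃ v : (t : Fin D) → (Fin t.1 → ℝ) → ℝ,
              ∀ ε : Fin D → ℝ, (∀ t, ε t = 1 ∨ ε t = -1) →
                ∃ ψ : Fin N → ℂ, (∑ i, ‖ψ i‖ ^ 2 = 1) ∧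
                  ∀ t : Fin D,
                    ε t * ((star ψ ⬝ᵥ (x t).mulVec ψ).re
                      - v t (fun s => ε ⟨s.1, s.2.trans t.2⟩)) ≥ δ := by
  have hη' : 0 < 1 - η := by linarith
  refine ⟨(1-η)/(8*η), by positivity, ⌈4*η/(1-η)⌉₊ + 1, ?_⟩
  intro n hn N hN δ hδ
  have hn1 : 1 ≤ n := le_trans (Nat.le_add_left 1 _) hn
  have hnR : 4*η/(1-η) ≤ (n:ℝ) := by
    calc 4*η/(1-η) ≤ (⌈4*η/(1-η)⌉₊ : ℝ) := Nat.le_ceil _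
    _ ≤ n := by exact_mod_cast le_trans (Nat.le_succ _) hn
  set B : ℝ := (n:ℝ)*(1-η)/(2*η) with hB
  have hB2 : 2 ≤ B := by
    rw [div_le_iff₀ hη'] at hnR
    rw [hB, le_div_iff₀ (by positivity)]
    linarith
  set d : ℕ := ⌊B⌋₊ with hd
  have hdB : (d:ℝ) ≤ B := Nat.floor_le (by linarith)
  have hBd : B < d + 1 := Nat.lt_floor_add_one B
  have hd1 : 1 ≤ d := Nat.le_floor (by exact_mod_cast (by linarith : (1:ℝ) ≤ B))
  have hdpos : 0 < d := hd1
  have hN1 : 1 ≤ N := by rw [hN]; exact Nat.one_le_two_pow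
  have hN2 : 2 ≤ N := by
    rw [hN]
    calc 2 = 2^1 := rfl
    _ ≤ 2^n := Nat.pow_le_pow_right (by norm_num) hn1
  have hδpos : 0 < δ := hδ ▸ Real.rpow_pos_of_pos (by norm_num) _
  have hδN : δ ^ (-η) = (N:ℝ) := by
    rw [hδ, ← Real.rpow_mul (by norm_num : (0:ℝ) ≤ 2), hN]
    push_cast
    rw [← Real.rpow_natCast 2 n]
    congr 1
    field_simp
  have hid : (n:ℝ) - (n:ℝ)/η = -(2*B) := by rw [hB]; field_simp; ring
  have hexp : (n:ℝ) + 1 + (-(n:ℝ)/η) + d ≤ 0 := by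
    have h1 : -(n:ℝ)/η = ((n:ℝ) - (n:ℝ)/η) - n := by ring
    rw [h1, hid]; linarith
  have hkey : (N:ℝ) * (2*δ*2^d) ≤ 1 := by
    have heq : (N:ℝ) * (2*δ*2^d) = (2:ℝ) ^ ((n:ℝ) + 1 + (-(n:ℝ)/η) + d) := by
      rw [Real.rpow_add two_pos, Real.rpow_add two_pos, Real.rpow_add two_pos, hδ, hN,
        Real.rpow_one, Real.rpow_natCast, Real.rpow_natCast]
      push_cast
      ring
    rw [heq]
    calc (2:ℝ)^((n:ℝ) + 1 + (-(n:ℝ)/η) + d) ≤ 2^(0:ℝ) :=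
      Real.rpow_le_rpow_of_exponent_le one_le_two hexp
    _ = 1 := Real.rpow_zero 2
  refine ⟨(N-1)*d, ?_, core N d δ hδpos hdpos hN2 hkey⟩
  rw [ge_iff_le, hδN]
  have hcast : (((N-1)*d : ℕ):ℝ) = ((N:ℝ)-1)*(d:ℝ) := by
    rw [Nat.cast_mul, Nat.cast_sub hN1]; push_cast; ring
  rw [hcast]
  have h1 : (N:ℝ)/2 ≤ (N:ℝ) - 1 := by
    have : (2:ℝ) ≤ N := by exact_mod_cast hN2
    linarith
  have h2 : B/2 ≤ (d:ℝ) := by linarith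
  have hNpos : (0:ℝ) < N := by positivity
  calc (1-η)/(8*η) * n * N = ((N:ℝ)/2) * (B/2) := by rw [hB]; field_simp; ring
  _ ≤ ((N:ℝ)-1) * d := mul_le_mul h1 h2 (by linarith) (by linarith)
end

section
/- Let N ≥ 2 and let w_2, …, w_N be real numbers with |w_i| ≤ 1/(2√(N−1)) for all i ∈ {2,…,N}. Then there exists an N×N real symmetric positive semidefinite matrix M of trace 1 such that M_{11} = 1/2, M_{ii} = 1/(2(N−1)) for all i ∈ {2,…,N}, and M_{1i} = M_{i1} = w_i for all i ∈ {2,…,N}. In particular, M (viewed as a complex Hermitian matrix) is an N-dimensional density matrix completing the given partial matrix. -/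
open ComplexOrder

open Matrix in
lemma posSemidef_vecMulVec_star {n : Type*} [Fintype n] {R : Type*} [CommRing R] [StarRing R]
    [PartialOrder R] [StarOrderedRing R] (x : n → R) :
    (vecMulVec x (star x)).PosSemidef := by
  rw [Matrix.posSemidef_iff_dotProduct_mulVec]
  constructor
  · ext i j
    simp [vecMulVec, Matrix.conjTranspose_apply, mul_comm]
  · intro v
    have h2 : star v ⬝ᵥ (vecMulVec x (star x) *ᵥ v) = star (star x ⬝ᵥ v) * (star x ⬝ᵥ v) := by
      simp only [Matrix.mulVec, vecMulVec, dotProduct, Matrix.of_apply, star_sum,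
        StarMul.star_mul, star_star, Pi.star_apply, Finset.sum_mul, Finset.mul_sum]
      rw [Finset.sum_comm]
      apply Finset.sum_congr rfl; intro i _
      apply Finset.sum_congr rfl; intro j _
      ring
    rw [h2]
    exact star_mul_self_nonneg _

/-- Any partial symmetric matrix with first diagonal entry 1/2, remaining
    diagonal entries 1/(2(N−1)), and specified first row/column entries w_i with
    |w_i| ≤ 1/(2√(N−1)), can be completed to a real symmetric positive semidefinite trace-1
    matrix; in particular (viewed over ℂ) to a density matrix. -/
theorem partial_matrix_completion (N : ℕ) (hN : 2 ≤ N) [NeZero N] (w : Fin N → ℝ)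
    (hw : ∀ i : Fin N, i ≠ 0 → |w i| ≤ 1 / (2 * Real.sqrt ((N : ℝ) - 1))) :
    ∃ M : Matrix (Fin N) (Fin N) ℝ,
      M.IsSymm ∧ M.PosSemidef ∧ M.trace = 1 ∧
      M 0 0 = 1 / 2 ∧
      (∀ i : Fin N, i ≠ 0 → M i i = 1 / (2 * ((N : ℝ) - 1))) ∧
      (∀ i : Fin N, i ≠ 0 → M 0 i = w i ∧ M i 0 = w i) ∧
      (M.map (Complex.ofReal)).IsHermitian ∧
      (M.map (Complex.ofReal)).PosSemidef ∧
      (M.map (Complex.ofReal)).trace = 1 := by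
  have hNR : (1 : ℝ) ≤ (N : ℝ) - 1 := by
    have : (2 : ℝ) ≤ (N : ℝ) := by exact_mod_cast hN
    linarith
  have hNpos : (0 : ℝ) < (N : ℝ) - 1 := by linarith
  set x : Fin N → ℝ := fun i => if i = 0 then Real.sqrt 2⁻¹ else Real.sqrt 2 * w i with hx
  set d : Fin N → ℝ := fun i => if i = 0 then 0 else 1 / (2 * ((N : ℝ) - 1)) - 2 * w i ^ 2 with hd
  have hdnn : 0 ≤ d := by
    intro i
    by_cases hi : i = 0
    · simp [hd, hi]
    · have h1 : |w i| ≤ 1 / (2 * Real.sqrt ((N : ℝ) - 1)) := hw i hi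
      have h2 : w i ^ 2 ≤ (1 / (2 * Real.sqrt ((N : ℝ) - 1))) ^ 2 := by
        rw [← sq_abs]
        exact pow_le_pow_left₀ (abs_nonneg _) h1 2
      have hs : Real.sqrt ((N : ℝ) - 1) ^ 2 = (N : ℝ) - 1 := Real.sq_sqrt (le_of_lt hNpos)
      have h3 : (1 / (2 * Real.sqrt ((N : ℝ) - 1))) ^ 2 = 1 / (4 * ((N : ℝ) - 1)) := by
        rw [div_pow, mul_pow, hs]; norm_num
      have : w i ^ 2 ≤ 1 / (4 * ((N : ℝ) - 1)) := h3 ▸ h2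
      have h4 : 2 * w i ^ 2 ≤ 1 / (2 * ((N : ℝ) - 1)) := by
        rw [le_div_iff₀ (by positivity)]
        rw [le_div_iff₀ (by positivity)] at this
        nlinarith [this]
      simp only [hd, Pi.zero_apply, if_neg hi]
      linarith
  set M : Matrix (Fin N) (Fin N) ℝ := Matrix.vecMulVec x x + Matrix.diagonal d with hM
  have hstarx : star x = x := by ext i; simp
  have hpsd : M.PosSemidef := by
    rw [hM]
    exact (hstarx ▸ posSemidef_vecMulVec_star x).add (Matrix.PosSemidef.diagonal hdnn)
  have hMapp : ∀ i j, M i j = x i * x j + if i = j then d i else 0 := by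
    intro i j
    simp [hM, Matrix.add_apply, Matrix.vecMulVec_apply, Matrix.diagonal_apply]
  have h00 : M 0 0 = 1 / 2 := by
    rw [hMapp]
    simp only [hx, hd, if_pos rfl]
    rw [Real.mul_self_sqrt (by norm_num : (0:ℝ) ≤ 2⁻¹)]
    norm_num
  have hdiag : ∀ i : Fin N, i ≠ 0 → M i i = 1 / (2 * ((N : ℝ) - 1)) := by
    intro i hi
    rw [hMapp]
    simp only [hx, hd, if_neg hi, if_pos rfl]
    have : Real.sqrt 2 * Real.sqrt 2 = 2 := Real.mul_self_sqrt (by norm_num)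
    rw [show Real.sqrt 2 * w i * (Real.sqrt 2 * w i)
      = Real.sqrt 2 * Real.sqrt 2 * (w i * w i) by ring, this]
    simp only [if_pos rfl, if_true]
    ring
  have hrow : ∀ i : Fin N, i ≠ 0 → M 0 i = w i ∧ M i 0 = w i := by
    intro i hi
    have hkey : Real.sqrt 2⁻¹ * Real.sqrt 2 = 1 := by
      rw [← Real.sqrt_mul (by norm_num)]; norm_num
    constructor
    · rw [hMapp]
      simp only [hx, if_pos rfl, if_neg hi, if_neg (Ne.symm hi)]
      linear_combination w i * hkey
    · rw [hMapp]
      simp only [hx, if_pos rfl, if_neg hi]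
      linear_combination w i * hkey
  have htrace : M.trace = 1 := by
    rw [Matrix.trace]
    have h1 : ∑ i, M.diag i = M 0 0 + ∑ i ∈ Finset.univ.erase 0, M i i := by
      rw [← Finset.add_sum_erase _ _ (Finset.mem_univ 0)]
      rfl
    rw [h1, h00]
    have h2 : ∑ i ∈ Finset.univ.erase 0, M i i
        = (Finset.univ.erase (0 : Fin N)).card • (1 / (2 * ((N : ℝ) - 1))) := by
      rw [Finset.sum_congr rfl fun i hi => hdiag i (Finset.ne_of_mem_erase hi)]
      rw [Finset.sum_const]
    rw [h2, Finset.card_erase_of_mem (Finset.mem_univ 0), Finset.card_univ, Fintype.card_fin]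
    have hcast : ((N - 1 : ℕ) : ℝ) = (N : ℝ) - 1 := by
      have : 1 ≤ N := by omega
      push_cast [this]; ring
    rw [nsmul_eq_mul, hcast]
    field_simp
    ring
  have hherm : (M.map Complex.ofReal).IsHermitian := by
    exact hpsd.isHermitian.map Complex.ofReal (fun r => by simp [Complex.conj_ofReal])
  have hmapeq : M.map Complex.ofReal
      = Matrix.vecMulVec (fun i => (x i : ℂ)) (star fun i => (x i : ℂ))
        + Matrix.diagonal (fun i => (d i : ℂ)) := by
    ext i j
    by_cases h : i = j <;>
      simp [hM, h, Matrix.map_apply, Matrix.add_apply, Matrix.vecMulVec_apply,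
        Matrix.diagonal_apply, Complex.conj_ofReal]
  have hpsdC : (M.map Complex.ofReal).PosSemidef := by
    rw [hmapeq]
    refine (posSemidef_vecMulVec_star _).add (Matrix.PosSemidef.diagonal ?_)
    intro i
    simpa using hdnn i
  have htraceC : (M.map Complex.ofReal).trace = 1 := by
    have : (M.map Complex.ofReal).trace = ((M.trace : ℝ) : ℂ) := by
      simp [Matrix.trace, Matrix.diag, Matrix.map_apply]
    rw [this, htrace, Complex.ofReal_one]
  have hsymm : M.IsSymm := by
    have h := hpsd.isHermitian
    rwa [Matrix.IsHermitian, Matrix.conjTranspose_eq_transpose_of_trivial] at h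
  exact ⟨M, hsymm, hpsd, htrace, h00, hdiag, hrow, hherm, hpsdC, htraceC⟩
end

section
/- Let n ≥ 2, N = 2^n, T ≥ 1, and 0 < δ ≤ 2^{−(T+2)}/√(N−1). Set D = T(N−1) and, for t ∈ {1,…,D}, set i(t) = ⌊(t−1)/T⌋ + 1 and x_t = E_{0,i(t)}. Then there exist functions v_t : {−1,1}^{t−1} → ℝ (t = 1,…,D) such that for every sign sequence ε ∈ {−1,1}^D there exists an N-dimensional density matrix ρ satisfying ε_t · (Re Tr(E_{0,i(t)} ρ) − v_t(ε_1,…,ε_{t−1})) ≥ δ for all t ∈ {1,…,D}. That is, the class of all N-dimensional density matrices δ-shatters sequentially a tree of depth T(2^n − 1) labelled by the two-outcome measurements E_{0,i}. -/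
open ComplexOrder Matrix

private lemma geo2 (k : ℕ) : ∑ i ∈ Finset.range k, ((2:ℝ)⁻¹)^i = 2 - 2*(2⁻¹)^k := by
  induction k with
  | zero => simp
  | succ k ih => rw [Finset.sum_range_succ, ih]; ring

private lemma sum_pair {N : ℕ} [NeZero N] {j : Fin N} (hj : j ≠ 0) (f : Fin N → ℂ) :
    ∑ x : Fin N, (if x = 0 ∨ x = j then f x else 0) = f 0 + f j := by
  have h : ∀ x : Fin N, (if x = 0 ∨ x = j then f x else 0)
      = (if x = 0 then f x else 0) + (if x = j then f x else 0) := by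
    intro x
    by_cases h0 : x = 0 <;> by_cases h1 : x = j <;> simp_all
  rw [Finset.sum_congr rfl fun x _ => h x, Finset.sum_add_distrib]
  simp

set_option maxHeartbeats 1000000 in
/-- For n ≥ 2, N = 2^n, T ≥ 1 and 0 < δ ≤ 2^{−(T+2)}/√(N−1), with D = T(N−1)
    and measurements x_t = E_{0,i(t)} where i(t) = ⌊(t−1)/T⌋ + 1 (0-based: t/T + 1), there are
    witness functions v_t : {−1,1}^{t−1} → ℝ such that every sign sequence ε ∈ {−1,1}^D is
    realized, with margin δ, by an N-dimensional density matrix ρ: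
    ε_t (Re Tr(E_{0,i(t)} ρ) − v_t(ε_1,…,ε_{t−1})) ≥ δ for all t.
    Here E_{0,j} is the matrix with entries 1/2 at positions (a,b) with a,b ∈ {0,j} and 0
    elsewhere, i.e. (1/2)(e_0e_0* + e_je_j* + e_0e_j* + e_je_0*). -/
theorem mixed_states_E0i_shattering (n T N D : ℕ) (hn : 2 ≤ n) (hT : 1 ≤ T)
    (hN : N = 2 ^ n) (hD : D = T * (N - 1))
    (δ : ℝ) (hδ0 : 0 < δ) (hδ : δ ≤ ((2 : ℝ) ^ (T + 2))⁻¹ / Real.sqrt ((N : ℝ) - 1))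
    (Em : ℕ → Matrix (Fin N) (Fin N) ℂ)
    (hEm : ∀ j : ℕ, ∀ a b : Fin N,
      Em j a b = if (a.1 = 0 ∨ a.1 = j) ∧ (b.1 = 0 ∨ b.1 = j) then 1 / 2 else 0) :
    ∃ v : (t : Fin D) → (Fin t.1 → ℝ) → ℝ,
      ∀ ε : Fin D → ℝ, (∀ t, ε t = 1 ∨ ε t = -1) →
        ∃ ρ : Matrix (Fin N) (Fin N) ℂ, ρ.PosSemidef ∧ ρ.trace = 1 ∧
          ∀ t : Fin D,
            ε t * ((Matrix.trace (Em (t.1 / T + 1) * ρ)).re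
              - v t (fun s => ε ⟨s.1, s.2.trans t.2⟩)) ≥ δ := by
  have hT0 : 0 < T := hT
  have hN4 : 4 ≤ N := by
    subst hN
    calc 4 = 2^2 := by norm_num
    _ ≤ 2^n := Nat.pow_le_pow_right (by norm_num) hn
  haveI : NeZero N := ⟨by omega⟩
  set Kr : ℝ := (N:ℝ) - 1 with hKrdef
  have hKr0 : 0 < Kr := by
    have h4 : (4:ℝ) ≤ (N:ℝ) := by exact_mod_cast hN4
    simp only [hKrdef]; linarith
  set sK : ℝ := Real.sqrt Kr with hsKdef
  have hsK : 0 < sK := Real.sqrt_pos.2 hKr0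
  have h2K0 : (0:ℝ) < 2*Kr := by linarith
  set m : ℝ := (Real.sqrt (2*Kr))⁻¹ with hmdef
  have hm0 : 0 < m := by
    rw [hmdef]; exact inv_pos.2 (Real.sqrt_pos.2 h2K0)
  have hm2 : m^2 = (2*Kr)⁻¹ := by
    rw [hmdef, inv_pow, Real.sq_sqrt h2K0.le]
  set α : ℝ := (Real.sqrt 2)⁻¹ with hαdef
  have hα0 : 0 < α := inv_pos.2 (Real.sqrt_pos.2 two_pos)
  have hα2 : α^2 = 2⁻¹ := by rw [hαdef, inv_pow, Real.sq_sqrt two_pos.le]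
  set r : ℝ := α * m with hrdef
  have hr0 : 0 < r := mul_pos hα0 hm0
  have hr : r = (2*sK)⁻¹ := by
    rw [hrdef, hαdef, hmdef, hsKdef, ← mul_inv, ← Real.sqrt_mul two_pos.le]
    congr 1
    rw [show (2:ℝ)*(2*Kr) = 2^2*Kr by ring,
      Real.sqrt_mul (by positivity), Real.sqrt_sq two_pos.le]
  set cen : ℝ := 2⁻¹*(2⁻¹ + m^2) with hcen
  refine ⟨fun t w => cen + r * ∑ u : Fin (t.1 % T),
      w ⟨t.1 - t.1 % T + u.1, by have h1 := Nat.mod_le t.1 T; have h2 := u.2; omega⟩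
        * (2⁻¹)^(u.1+1), ?_⟩
  intro ε hε
  set ε' : ℕ → ℝ := fun x => if h : x < D then ε ⟨x,h⟩ else 1 with hε'def
  have hε'1 : ∀ x, |ε' x| ≤ 1 := by
    intro x
    rw [hε'def]
    dsimp only
    split
    · rcases hε ⟨x, ‹_›⟩ with h | h <;> rw [h] <;> norm_num
    · norm_num
  have hε'eq : ∀ (x : ℕ) (h : x < D), ε ⟨x,h⟩ = ε' x := by
    intro x h; simp only [hε'def]; rw [dif_pos h]
  set g : ℕ → ℝ := fun j => ∑ u ∈ Finset.range T, ε' ((j-1)*T + u) * (2⁻¹)^(u+1) with hgdef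
  have hg1 : ∀ j, |g j| ≤ 1 := by
    intro j
    calc |g j| ≤ ∑ u ∈ Finset.range T, |ε' ((j-1)*T + u) * (2⁻¹)^(u+1)| := by
          rw [hgdef]; exact Finset.abs_sum_le_sum_abs _ _
    _ ≤ ∑ u ∈ Finset.range T, ((2:ℝ)⁻¹)^(u+1) := by
        refine Finset.sum_le_sum fun u _ => ?_
        rw [abs_mul, abs_pow, abs_of_pos (by norm_num : (0:ℝ) < 2⁻¹)]
        exact mul_le_of_le_one_left (by positivity) (hε'1 _)
    _ ≤ 1 := by
        have h1 : ∑ u ∈ Finset.range T, ((2:ℝ)⁻¹)^(u+1)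
            = 2⁻¹ * ∑ u ∈ Finset.range T, ((2:ℝ)⁻¹)^u := by
          rw [Finset.mul_sum]; exact Finset.sum_congr rfl fun u _ => by ring
        rw [h1, geo2]
        have h2 : (0:ℝ) < (2⁻¹)^T := by positivity
        nlinarith
  set ψ : Fin N → ℝ := fun a => if a.1 = 0 then α else m * g a.1 with hψdef
  set d : Fin N → ℝ := fun a => if a.1 = 0 then 0 else m^2 * (1 - g a.1 ^ 2) with hddef
  have hd0 : ∀ a, 0 ≤ d a := by
    intro a; rw [hddef]; dsimp only; split
    · exact le_refl 0
    · have h1 := abs_le.mp (hg1 a.1)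
      have h3 : 0 ≤ 1 - g a.1 ^ 2 := by nlinarith [h1.1, h1.2]
      exact mul_nonneg (sq_nonneg m) h3
  set ρ : Matrix (Fin N) (Fin N) ℂ :=
    Matrix.of (fun a b => (((ψ a * ψ b + if a = b then d a else 0 : ℝ)) : ℂ)) with hρdef
  set B : Matrix (Fin 1) (Fin N) ℂ := Matrix.of (fun _ j => ((ψ j : ℝ) : ℂ)) with hB
  have hform : ρ = Bᴴ * B + Matrix.diagonal (fun a => ((d a : ℝ) : ℂ)) := by
    ext a b
    simp only [hρdef, hB, Matrix.add_apply, Matrix.mul_apply, Matrix.conjTranspose_apply,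
      Matrix.diagonal_apply, Matrix.of_apply, Fin.sum_univ_one, Complex.star_def,
      Complex.conj_ofReal, Complex.ofReal_add, Complex.ofReal_mul, apply_ite Complex.ofReal,
      Complex.ofReal_zero]
  have hPSD : ρ.PosSemidef := by
    rw [hform]
    exact (Matrix.posSemidef_conjTranspose_mul_self B).add
      (Matrix.posSemidef_diagonal_iff.2 fun a => Complex.zero_le_real.2 (hd0 a))
  have hψd : ∀ a : Fin N, ψ a * ψ a + d a = if a.1 = 0 then 2⁻¹ else m^2 := by
    intro a; rw [hψdef, hddef]; dsimp only; split
    · rw [add_zero, ← sq, hα2]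
    · ring
  have htr : ρ.trace = 1 := by
    have h1 : ∀ a : Fin N, ρ a a = (((if a.1 = 0 then (2:ℝ)⁻¹ else m^2) : ℝ) : ℂ) := by
      intro a
      show ((ψ a * ψ a + if a = a then d a else 0 : ℝ) : ℂ) = _
      rw [if_pos rfl, hψd a]
    have h2 : ρ.trace = ∑ a : Fin N, ρ a a := by
      simp [Matrix.trace, Matrix.diag]
    rw [h2, Finset.sum_congr rfl fun a _ => h1 a, ← Complex.ofReal_sum]
    have hsum : ∑ a : Fin N, (if a.1 = 0 then (2:ℝ)⁻¹ else m^2) = 1 := by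
      have h3 : ∀ a : Fin N, (if a.1 = 0 then (2:ℝ)⁻¹ else m^2)
          = (if a = 0 then 2⁻¹ - m^2 else 0) + m^2 := by
        intro a
        have hiff : a.1 = 0 ↔ a = 0 := by rw [Fin.ext_iff]; simp
        rw [if_congr hiff rfl rfl]
        split <;> ring
      rw [Finset.sum_congr rfl fun a _ => h3 a, Finset.sum_add_distrib,
        Finset.sum_ite_eq' Finset.univ (0 : Fin N) (fun _ => (2:ℝ)⁻¹ - m^2)]
      simp only [Finset.mem_univ, if_true, Finset.sum_const, Finset.card_univ,
        Fintype.card_fin, nsmul_eq_mul]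
      rw [hm2]
      have hNr : ((N:ℝ)) = Kr + 1 := by rw [hKrdef]; ring
      rw [hNr]
      field_simp
      ring
    rw [hsum, Complex.ofReal_one]
  refine ⟨ρ, hPSD, htr, ?_⟩
  intro t
  have htD : t.1 < D := t.2
  set jn : ℕ := t.1 / T + 1 with hjn
  have hdiv : t.1 / T < N - 1 := by
    rw [Nat.div_lt_iff_lt_mul hT0, mul_comm]
    exact hD ▸ htD
  have hjnN : jn < N := by omega
  set jf : Fin N := ⟨jn, hjnN⟩ with hjf
  have hjf0 : jf ≠ 0 := by
    refine Fin.ne_of_val_ne ?_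
    simp [hjf, hjn]
  have hcond : ∀ a : Fin N, (a.1 = 0 ∨ a.1 = jn) ↔ (a = 0 ∨ a = jf) := by
    intro a
    rw [Fin.ext_iff (b := (0 : Fin N)), Fin.ext_iff (b := jf)]
    simp [hjf]
  -- entries of ρ
  have hjn0 : jn ≠ 0 := by rw [hjn]; exact Nat.succ_ne_zero _
  have e00 : ρ 0 0 = ((α * α : ℝ) : ℂ) := by
    show ((ψ 0 * ψ 0 + if (0:Fin N) = 0 then d 0 else 0 : ℝ) : ℂ) = _
    rw [if_pos rfl, hψdef, hddef]
    norm_num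
  have ej0 : ρ jf 0 = (((m * g jn) * α : ℝ) : ℂ) := by
    show ((ψ jf * ψ 0 + if jf = (0:Fin N) then d jf else 0 : ℝ) : ℂ) = _
    rw [if_neg hjf0, hψdef]
    simp [hjf, hjn0]
  have e0j : ρ 0 jf = ((α * (m * g jn) : ℝ) : ℂ) := by
    show ((ψ 0 * ψ jf + if (0:Fin N) = jf then d 0 else 0 : ℝ) : ℂ) = _
    rw [if_neg (Ne.symm hjf0), hψdef]
    simp [hjf, hjn0]
  have ejj : ρ jf jf = (((m * g jn) * (m * g jn) + m^2*(1 - g jn ^2) : ℝ) : ℂ) := by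
    show ((ψ jf * ψ jf + if jf = jf then d jf else 0 : ℝ) : ℂ) = _
    rw [if_pos rfl, hψdef, hddef]
    simp [hjf, hjn0]
  have htrace : (Em jn * ρ).trace = (((2:ℝ)⁻¹ * (α^2 + 2*(α*m)*(g jn) + m^2) : ℝ) : ℂ) := by
    have h1 : ∀ a : Fin N, (∑ b : Fin N, Em jn a b * ρ b a)
        = if a = 0 ∨ a = jf then (1/2:ℂ) * (ρ 0 a + ρ jf a) else 0 := by
      intro a
      by_cases ha : a = 0 ∨ a = jf
      · rw [if_pos ha]
        have h2 : ∀ b : Fin N, Em jn a b * ρ b a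
            = if b = 0 ∨ b = jf then (1/2:ℂ) * ρ b a else 0 := by
          intro b
          rw [hEm]
          by_cases hb : b = 0 ∨ b = jf
          · rw [if_pos ⟨(hcond a).2 ha, (hcond b).2 hb⟩, if_pos hb]
          · rw [if_neg, if_neg hb, zero_mul]
            intro hcontra
            exact hb ((hcond b).1 hcontra.2)
        rw [Finset.sum_congr rfl fun b _ => h2 b,
          sum_pair hjf0 (fun b => (1/2:ℂ) * ρ b a)]
        ring
      · rw [if_neg ha]
        refine Finset.sum_eq_zero fun b _ => ?_
        rw [hEm, if_neg, zero_mul]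
        intro hcontra
        exact ha ((hcond a).1 hcontra.1)
    have h0 : (Em jn * ρ).trace = ∑ a : Fin N, ∑ b : Fin N, Em jn a b * ρ b a := by
      simp [Matrix.trace, Matrix.diag, Matrix.mul_apply]
    rw [h0, Finset.sum_congr rfl fun a _ => h1 a,
      sum_pair hjf0 (fun a => (1/2:ℂ) * (ρ 0 a + ρ jf a)),
      e00, ej0, e0j, ejj]
    push_cast
    ring
  rw [htrace, Complex.ofReal_re]
  beta_reduce
  simp only [hε'eq]
  set st := t.1 % T with hst
  have hstle : st ≤ t.1 := by rw [hst]; exact Nat.mod_le _ _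
  have hstT : st < T := by rw [hst]; exact Nat.mod_lt _ hT0
  set base := t.1 - st with hbase
  rw [show (∑ u : Fin st, ε' (base + u.1) * (2:ℝ)⁻¹^(u.1+1))
      = ∑ u ∈ Finset.range st, ε' (base + u) * (2:ℝ)⁻¹^(u+1)
    from Fin.sum_univ_eq_sum_range (fun x => ε' (base + x) * (2:ℝ)⁻¹^(x+1)) st]
  set S := ∑ u ∈ Finset.range st, ε' (base + u) * (2:ℝ)⁻¹^(u+1) with hS
  have hsimp : 2⁻¹ * (α^2 + 2*(α*m)*(g jn) + m^2) - (cen + r * S) = r * (g jn - S) := by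
    rw [hcen, hα2, hrdef]; ring
  rw [hsimp]
  have hbase' : (jn - 1) * T = base := by
    have h1 : t.1 - st = T * (t.1 / T) := by
      rw [hst]; exact Nat.sub_eq_of_eq_add (Nat.div_add_mod t.1 T).symm
    rw [hjn, Nat.add_sub_cancel, hbase, h1, mul_comm]
  have hsplit : g jn - S = ∑ u ∈ Finset.Ico st T, ε' (base + u) * (2:ℝ)⁻¹^(u+1) := by
    have h1 : g jn = ∑ u ∈ Finset.range T, ε' (base + u) * (2:ℝ)⁻¹^(u+1) := by
      rw [hgdef]; dsimp only; rw [hbase']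
    rw [h1, hS, Finset.range_eq_Ico,
      ← Finset.sum_Ico_consecutive _ (Nat.zero_le st) hstT.le]
    rw [← Finset.range_eq_Ico]
    ring
  set k := T - st - 1 with hk
  have hTk : T - st = k + 1 := by omega
  have hbs : base + (st + 0) = t.1 := by omega
  have hεteq : ε' t.1 = ε t := by rw [← hε'eq t.1 htD]
  set R := ∑ i ∈ Finset.range k, ε' (base + (st + (i+1))) * ((2:ℝ)⁻¹)^(st+(i+1)+1) with hR
  have htail : ∑ u ∈ Finset.Ico st T, ε' (base + u) * ((2:ℝ)⁻¹)^(u+1)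
      = ε t * (2⁻¹)^(st+1) + R := by
    rw [Finset.sum_Ico_eq_sum_range, hTk, Finset.sum_range_succ']
    rw [hbs, hεteq, hR]
    norm_num
    ring
  have hRb : |R| ≤ ((2:ℝ)⁻¹)^(st+1) - (2⁻¹)^T := by
    have h1 : |R| ≤ ∑ i ∈ Finset.range k, ((2:ℝ)⁻¹)^(st+(i+1)+1) := by
      rw [hR]
      refine (Finset.abs_sum_le_sum_abs _ _).trans (Finset.sum_le_sum fun i _ => ?_)
      rw [abs_mul, abs_pow, abs_of_pos (by norm_num : (0:ℝ) < 2⁻¹)]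
      exact mul_le_of_le_one_left (by positivity) (hε'1 _)
    have h2 : ∑ i ∈ Finset.range k, ((2:ℝ)⁻¹)^(st+(i+1)+1)
        = (2⁻¹)^(st+2) * ∑ i ∈ Finset.range k, ((2:ℝ)⁻¹)^i := by
      rw [Finset.mul_sum]
      refine Finset.sum_congr rfl fun i _ => ?_
      rw [← pow_add]
      congr 1
      omega
    have e2 : ((2:ℝ)⁻¹)^(st+2) * (2⁻¹)^k = (2⁻¹)^T * 2⁻¹ := by
      rw [← pow_add, show st+2+k = T+1 by omega, pow_succ]
    have e1 : ((2:ℝ)⁻¹)^(st+2) = (2⁻¹)^(st+1) * 2⁻¹ := pow_succ _ _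
    rw [h2, geo2] at h1
    calc |R| ≤ ((2:ℝ)⁻¹)^(st+2) * (2 - 2*(2⁻¹)^k) := h1
    _ = ((2:ℝ)⁻¹)^(st+1) - (2⁻¹)^T := by linear_combination 2*e1 - 2*e2
  have hεt2 : ε t * ε t = 1 := by rcases hε t with h | h <;> rw [h] <;> norm_num
  have habs : |ε t| = 1 := by rcases hε t with h | h <;> rw [h] <;> norm_num
  have hεR : -|R| ≤ ε t * R :=
    calc -|R| = -(|ε t| * |R|) := by rw [habs]; ring
    _ = -|ε t * R| := by rw [← abs_mul]
    _ ≤ ε t * R := neg_abs_le _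
  rw [hsplit, htail, ge_iff_le]
  calc δ ≤ r * ((2:ℝ)⁻¹)^T := by
        refine hδ.trans ?_
        rw [hr]
        have hA : ((2:ℝ)^(T+2))⁻¹ / sK = ((2:ℝ)^(T+2) * sK)⁻¹ := by
          rw [div_eq_mul_inv, ← mul_inv]
        have hB2 : (2*sK)⁻¹ * ((2:ℝ)⁻¹)^T = ((2*sK)*2^T)⁻¹ := by
          rw [inv_pow, ← mul_inv]
        rw [hA, hB2]
        refine inv_anti₀ (by positivity) ?_
        have h2T : (0:ℝ) < 2^T := by positivity
        rw [pow_add]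
        nlinarith [hsK, mul_pos hsK h2T]
  _ ≤ r * (((2:ℝ)⁻¹)^(st+1) + ε t * R) := by
        refine mul_le_mul_of_nonneg_left ?_ hr0.le
        linarith [hRb, hεR]
  _ = ε t * (r * (ε t * ((2:ℝ)⁻¹)^(st+1) + R)) := by
        linear_combination (-r * ((2:ℝ)⁻¹)^(st+1)) * hεt2
  _ = ε' t.1 * (r * (ε t * ((2:ℝ)⁻¹)^(st+1) + R)) := by rw [hεteq]
end

section
/- For every η with 0 < η < 2 there exist a constant c > 0 and n₀ ∈ ℕ such that for every n ≥ n₀ the following holds with N = 2^n and δ = 2^{−n/η}: there exist a natural number D ≥ c · n · δ^{−η}, a sequence of two-outcome measurements E^{(1)},…,E^{(D)} on ℂ^N (N×N Hermitian matrices with eigenvalues in [0,1]), and functions v_t : {−1,1}^{t−1} → ℝ (t = 1,…,D), such that for every sign sequence ε ∈ {−1,1}^D there exists an N-dimensional density matrix ρ with ε_t · (Re Tr(E^{(t)}ρ) − v_t(ε_1,…,ε_{t−1})) ≥ δ for all t ∈ {1,…,D}. In words: the sequential fat-shattering dimension of n-qubit mixed states against general two-outcome measurements at scale δ = 2^{−n/η}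 is Ω(n/δ^η) for every η < 2. -/
open ComplexOrder Matrix

namespace SfatAux

noncomputable section

variable {K : ℕ}

/-! ### Linear algebra helpers -/

def sgl (a : Fin K) (x : ℂ) : Fin K → ℂ := fun i => if i = a then x else 0

lemma psd_add {A B : Matrix (Fin K) (Fin K) ℂ} (hA : A.PosSemidef) (hB : B.PosSemidef) :
    (A + B).PosSemidef := by
  refine Matrix.PosSemidef.of_dotProduct_mulVec_nonneg (hA.1.add hB.1) fun x => ?_
  rw [Matrix.add_mulVec, dotProduct_add]
  exact add_nonneg (hA.dotProduct_mulVec_nonneg x) (hB.dotProduct_mulVec_nonneg x)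

lemma outer_psd (v : Fin K → ℂ) : (Matrix.vecMulVec v (star v)).PosSemidef := by
  refine Matrix.PosSemidef.of_dotProduct_mulVec_nonneg ?_ ?_
  · ext i j
    simp [Matrix.vecMulVec_apply, Matrix.conjTranspose_apply, mul_comm]
  · intro x
    have h1 : (Matrix.vecMulVec v (star v)) *ᵥ x = (star v ⬝ᵥ x) • v := by
      ext i
      simp only [Matrix.mulVec, Matrix.vecMulVec_apply, dotProduct, Pi.smul_apply, Pi.star_apply,
        Finset.sum_mul, smul_eq_mul]
      exact Finset.sum_congr rfl fun k _ => by ring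
    rw [h1, dotProduct_smul]
    have h2 : star x ⬝ᵥ v = starRingEnd ℂ (star v ⬝ᵥ x) := by
      simp [dotProduct, Pi.star_apply, map_sum, mul_comm]
    rw [smul_eq_mul, h2, Complex.mul_conj]
    exact_mod_cast Complex.normSq_nonneg _

lemma trace_sgl_outer (a b : Fin K) (x y : ℂ) (B : Matrix (Fin K) (Fin K) ℂ) :
    (Matrix.vecMulVec (sgl a x) (sgl b y) * B).trace = x * y * B b a := by
  simp only [Matrix.trace, Matrix.diag, Matrix.mul_apply, Matrix.vecMulVec_apply, sgl,
    ite_mul, zero_mul, mul_ite, mul_zero]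
  rw [Finset.sum_comm]
  simp [Finset.sum_ite_eq', mul_assoc]

lemma trace_diag_mul (d : Fin K → ℂ) (B : Matrix (Fin K) (Fin K) ℂ) :
    (Matrix.diagonal d * B).trace = ∑ i, d i * B i i := by
  simp [Matrix.trace, Matrix.diag, Matrix.diagonal_mul]

/-! ### The measurements -/

def dd (a z : Fin K) : Fin K → ℂ := fun i => if i = a ∨ i = z then 0 else (1/2 : ℂ)

def hC : ℂ := ⟨1/2, 1/2⟩

lemma hC_mul_conj : hC * (starRingEnd ℂ) hC = 1/2 := by
  rw [Complex.mul_conj]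
  rw [show Complex.normSq hC = 1/2 by rw [hC, Complex.normSq_mk]; norm_num]
  norm_num

def uu (a z : Fin K) : Fin K → ℂ := fun i => sgl a hC i + sgl z hC i
def ww (a z : Fin K) : Fin K → ℂ := fun i => sgl a hC i - sgl z hC i

def Emat (a z : Fin K) : Matrix (Fin K) (Fin K) ℂ :=
  Matrix.diagonal (dd a z) + Matrix.vecMulVec (uu a z) (star (uu a z))

lemma dd_nonneg (a z : Fin K) : ∀ i, 0 ≤ dd a z i := by
  intro i
  dsimp [dd]
  split
  · exact le_refl 0
  · rw [show ((1:ℂ)/2) = ((1/2 : ℝ) : ℂ) by norm_num, Complex.zero_le_real]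
    norm_num

lemma Emat_psd (a z : Fin K) : (Emat a z).PosSemidef :=
  psd_add (Matrix.posSemidef_diagonal_iff.mpr (dd_nonneg a z)) (outer_psd _)

lemma one_sub_Emat (a z : Fin K) (haz : a ≠ z) :
    1 - Emat a z = Matrix.diagonal (dd a z) + Matrix.vecMulVec (ww a z) (star (ww a z)) := by
  ext i j
  simp only [Matrix.sub_apply, Matrix.add_apply, Matrix.one_apply, Matrix.diagonal_apply,
    Matrix.vecMulVec_apply, Emat, dd, uu, ww, sgl, Pi.star_apply]
  have hcc := hC_mul_conj
  by_cases hia : i = a <;> by_cases hiz : i = z <;> by_cases hja : j = a <;>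
    by_cases hjz : j = z <;>
    simp_all <;>
    first
      | (intro h; subst h; simp_all)
      | (split <;> norm_num)
      | ring_nf

lemma one_sub_Emat_psd (a z : Fin K) (haz : a ≠ z) : (1 - Emat a z).PosSemidef := by
  rw [one_sub_Emat a z haz]
  exact psd_add (Matrix.posSemidef_diagonal_iff.mpr (dd_nonneg a z)) (outer_psd _)

lemma vecMulVec_add_add (f g p q : Fin K → ℂ) :
    Matrix.vecMulVec (fun i => f i + g i) (fun j => p j + q j)
      = Matrix.vecMulVec f p + Matrix.vecMulVec f q + Matrix.vecMulVec g p
        + Matrix.vecMulVec g q := by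
  ext i j
  simp [Matrix.vecMulVec_apply]
  ring

lemma star_uu (a z : Fin K) :
    star (uu a z) = fun j => sgl a ((starRingEnd ℂ) hC) j + sgl z ((starRingEnd ℂ) hC) j := by
  funext j
  simp [uu, sgl, Pi.star_apply, apply_ite (starRingEnd ℂ)]

lemma sum_dd_mul (a z : Fin K) (haz : a ≠ z) (f : Fin K → ℂ) :
    ∑ i, dd a z i * f i = (1/2) * (∑ i, f i) - (1/2) * f a - (1/2) * f z := by
  have key : ∀ i, dd a z i * f i
      = (1/2) * f i - (if i = a then (1/2) * f a else 0)
        - (if i = z then (1/2) * f z else 0) := by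
    intro i
    dsimp [dd]
    by_cases h1 : i = a <;> by_cases h2 : i = z <;> simp_all <;> ring
  rw [Finset.sum_congr rfl (fun i _ => key i), Finset.sum_sub_distrib, Finset.sum_sub_distrib,
    Finset.sum_ite_eq' Finset.univ a, Finset.sum_ite_eq' Finset.univ z]
  simp [Finset.mul_sum]

lemma trace_Emat_mul (a z : Fin K) (haz : a ≠ z) (B : Matrix (Fin K) (Fin K) ℂ) :
    (Emat a z * B).trace
      = (1/2) * (∑ i, B i i) + (1/2) * (B a z + B z a) := by
  rw [Emat, Matrix.add_mul, Matrix.trace_add, trace_diag_mul, sum_dd_mul a z haz, star_uu]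
  rw [show (uu a z) = (fun i => sgl a hC i + sgl z hC i) from rfl]
  rw [vecMulVec_add_add, Matrix.add_mul, Matrix.add_mul, Matrix.add_mul,
    Matrix.trace_add, Matrix.trace_add, Matrix.trace_add,
    trace_sgl_outer, trace_sgl_outer, trace_sgl_outer, trace_sgl_outer, hC_mul_conj]
  ring

/-! ### The states -/

def r0 : ℝ := (Real.sqrt 2)⁻¹
def kk (m : ℕ) : ℝ := (Real.sqrt (2*m))⁻¹

def ψv (K m : ℕ) (g : ℕ → ℝ) : Fin K → ℂ := fun i =>
  if i.1 = 0 then (r0 : ℝ)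
  else (kk m : ℝ) * ((g (i.1-1) : ℝ) + Complex.I * (Real.sqrt (1 - g (i.1-1)^2) : ℝ))

def ρv (K m : ℕ) (g : ℕ → ℝ) : Matrix (Fin K) (Fin K) ℂ :=
  Matrix.vecMulVec (ψv K m g) (star (ψv K m g))

lemma ρv_apply (m : ℕ) (g : ℕ → ℝ) (i j : Fin K) :
    ρv K m g i j = ψv K m g i * (starRingEnd ℂ) (ψv K m g j) := by
  simp [ρv, Matrix.vecMulVec_apply, Pi.star_apply, RCLike.star_def]

lemma normSq_ψ0 (m : ℕ) (g : ℕ → ℝ) (i : Fin K) (h : i.1 = 0) :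
    ψv K m g i * (starRingEnd ℂ) (ψv K m g i) = ((1/2 : ℝ) : ℂ) := by
  simp only [ψv, h, if_pos]
  rw [Complex.mul_conj]
  rw [Complex.normSq_ofReal]
  rw [r0, ← mul_inv, Real.mul_self_sqrt (by norm_num : (2:ℝ) ≥ 0)]
  norm_num

lemma normSq_ψz (m : ℕ) (hm : 1 ≤ m) (g : ℕ → ℝ) (i : Fin K) (h : ¬ i.1 = 0)
    (hg : |g (i.1-1)| ≤ 1) :
    ψv K m g i * (starRingEnd ℂ) (ψv K m g i) = (((2*(m:ℝ))⁻¹ : ℝ) : ℂ) := by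
  set c := g (i.1-1) with hc
  have hc2 : c^2 ≤ 1 := by nlinarith [abs_le.mp hg]
  simp only [ψv, h, if_neg, if_false]
  rw [Complex.mul_conj, Complex.normSq_mul, Complex.normSq_ofReal]
  have him : Complex.normSq ((c : ℝ) + Complex.I * (Real.sqrt (1 - c^2) : ℝ)) = 1 := by
    rw [Complex.normSq_apply]
    simp [Complex.add_re, Complex.add_im, Complex.mul_re, Complex.mul_im]
    rw [Real.mul_self_sqrt (by linarith : (0:ℝ) ≤ 1 - c^2)]
    ring
  rw [him, mul_one, kk, ← mul_inv, Real.mul_self_sqrt (by positivity : (0:ℝ) ≤ 2*(m:ℝ))]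

lemma sum_diag_ρv (m : ℕ) (hm : 1 ≤ m) (hK : K = m + 1) (g : ℕ → ℝ)
    (hg : ∀ x, |g x| ≤ 1) :
    ∑ i, ρv K m g i i = 1 := by
  subst hK
  have key : ∀ i : Fin (m+1), ρv (m+1) m g i i
      = if i.1 = 0 then ((1/2:ℝ):ℂ) else (((2*(m:ℝ))⁻¹ : ℝ) : ℂ) := by
    intro i
    rw [ρv_apply]
    by_cases h : i.1 = 0
    · rw [if_pos h, normSq_ψ0 m g i h]
    · rw [if_neg h, normSq_ψz m hm g i h (hg _)]
  rw [Finset.sum_congr rfl (fun i _ => key i)]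
  rw [Fin.sum_univ_succ]
  simp only [Fin.val_zero, if_pos, Fin.val_succ, Nat.succ_ne_zero, if_neg, if_true, if_false,
    ite_false]
  rw [Finset.sum_const, Finset.card_univ, Fintype.card_fin]
  have hmne : (m:ℝ) ≠ 0 := by positivity
  rw [nsmul_eq_mul]
  rw [← Complex.ofReal_natCast, ← Complex.ofReal_mul, ← Complex.ofReal_add]
  rw [show (m:ℝ) * (2*(m:ℝ))⁻¹ = 1/2 by field_simp]
  norm_num

lemma corner_ρv (m : ℕ) (g : ℕ → ℝ) (a z : Fin K) (ha : a.1 = 0) (hz : ¬ z.1 = 0) :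
    ρv K m g a z + ρv K m g z a = ((2 * r0 * kk m * g (z.1-1) : ℝ) : ℂ) := by
  rw [ρv_apply, ρv_apply]
  simp only [ψv, ha, if_pos, hz, if_neg, if_false]
  set w : ℂ := ((g (z.1-1) : ℝ) + Complex.I * (Real.sqrt (1 - g (z.1-1)^2) : ℝ)) with hw
  have h1 : (r0:ℂ) * (starRingEnd ℂ) ((kk m : ℝ) * w) + ((kk m:ℝ) * w) * (starRingEnd ℂ) (r0:ℝ)
      = (r0:ℂ) * (kk m : ℝ) * (w + (starRingEnd ℂ) w) := by
    rw [_root_.map_mul, Complex.conj_ofReal, Complex.conj_ofReal]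
    ring
  rw [h1, Complex.add_conj]
  rw [hw]
  simp only [Complex.add_re, Complex.ofReal_re, Complex.mul_re, Complex.I_re, Complex.I_im,
    Complex.ofReal_im, zero_mul, one_mul, zero_sub, mul_zero]
  push_cast
  ring

lemma re_trace_Emat_ρv (m : ℕ) (hm : 1 ≤ m) (hK : K = m + 1) (g : ℕ → ℝ)
    (hg : ∀ x, |g x| ≤ 1) (a z : Fin K) (ha : a.1 = 0) (hz : ¬ z.1 = 0) (haz : a ≠ z) :
    ((Emat a z * ρv K m g).trace).re = 1/2 + r0 * kk m * g (z.1-1) := by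
  rw [trace_Emat_mul a z haz, sum_diag_ρv m hm hK g hg, corner_ρv m g a z ha hz]
  rw [show ((1:ℂ)/2) = ((1/2:ℝ):ℂ) by norm_num]
  rw [mul_one, ← Complex.ofReal_mul, ← Complex.ofReal_add, Complex.ofReal_re]
  ring

/-! ### Bisection combinatorics -/

def ccv (e : ℕ → ℝ) (L x : ℕ) : ℝ := ∑ j ∈ Finset.range L, e (x*L+j) * (1/2:ℝ)^(j+1)

lemma geom_range (L : ℕ) : ∑ j ∈ Finset.range L, (1/2:ℝ)^(j+1) = 1 - (1/2)^L := by
  induction L with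
  | zero => simp
  | succ L ih => rw [Finset.sum_range_succ, ih]; ring

lemma geom_Ico (a L : ℕ) (h : a ≤ L) :
    ∑ j ∈ Finset.Ico a L, (1/2:ℝ)^(j+1) = (1/2)^a - (1/2)^L := by
  have := Finset.sum_range_add_sum_Ico (fun j => (1/2:ℝ)^(j+1)) h
  rw [geom_range, geom_range] at this
  linarith

lemma abs_sum_pow_le (e : ℕ → ℝ) (he : ∀ s, |e s| = 1) (f : ℕ → ℕ) (S : Finset ℕ) :
    |∑ j ∈ S, e (f j) * (1/2:ℝ)^(j+1)| ≤ ∑ j ∈ S, (1/2:ℝ)^(j+1) := by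
  refine (Finset.abs_sum_le_sum_abs _ _).trans ?_
  apply Finset.sum_le_sum
  intro j _
  rw [abs_mul, he (f j), one_mul, abs_of_nonneg (by positivity)]

lemma abs_ccv_le (e : ℕ → ℝ) (he : ∀ s, |e s| = 1) (L x : ℕ) : |ccv e L x| ≤ 1 := by
  refine (abs_sum_pow_le e he _ _).trans ?_
  rw [geom_range]
  have : (0:ℝ) ≤ (1/2)^L := by positivity
  linarith

lemma core_ineq (e : ℕ → ℝ) (he : ∀ s, |e s| = 1) (L x j0 : ℕ) (hj : j0 < L) :
    e (x*L + j0) * (ccv e L x - ∑ j ∈ Finset.range j0, e (x*L+j) * (1/2:ℝ)^(j+1))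
      ≥ (1/2:ℝ)^L := by
  have hsplit : ccv e L x
      = (∑ j ∈ Finset.range j0, e (x*L+j) * (1/2:ℝ)^(j+1))
        + e (x*L+j0) * (1/2)^(j0+1)
        + ∑ j ∈ Finset.Ico (j0+1) L, e (x*L+j) * (1/2:ℝ)^(j+1) := by
    rw [ccv, ← Finset.sum_range_add_sum_Ico _ (show j0+1 ≤ L from hj),
      Finset.sum_range_succ]
  set T := ∑ j ∈ Finset.Ico (j0+1) L, e (x*L+j) * (1/2:ℝ)^(j+1) with hT
  have hTabs : |T| ≤ (1/2:ℝ)^(j0+1) - (1/2)^L := by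
    have h1 := abs_sum_pow_le e he (fun j => x*L+j) (Finset.Ico (j0+1) L)
    rw [geom_Ico (j0+1) L hj] at h1
    exact h1
  have hee : e (x*L+j0) * e (x*L+j0) = 1 := by
    have h := he (x*L+j0)
    nlinarith [abs_nonneg (e (x*L+j0)), sq_abs (e (x*L+j0))]
  have heabs : |e (x*L+j0)| = 1 := he _
  rw [hsplit]
  have expand : e (x*L+j0) * ((∑ j ∈ Finset.range j0, e (x*L+j) * (1/2:ℝ)^(j+1))
        + e (x*L+j0) * (1/2)^(j0+1) + T
        - ∑ j ∈ Finset.range j0, e (x*L+j) * (1/2:ℝ)^(j+1))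
      = (e (x*L+j0) * e (x*L+j0)) * (1/2)^(j0+1) + e (x*L+j0) * T := by ring
  rw [expand, hee, one_mul]
  have hlow : -(|T|) ≤ e (x*L+j0) * T := by
    rw [show |T| = |e (x*L+j0) * T| by rw [abs_mul, heabs, one_mul]]
    exact neg_abs_le _
  linarith

end

end SfatAux

open SfatAux in
/-- For every 0 < η < 2 there are c > 0 and n₀ such that for all n ≥ n₀, with
    N = 2^n and δ = 2^{−n/η}, the class of all N-dimensional density matrices δ-shatters
    sequentially a sequence of D ≥ c·n·δ^{−η} two-outcome measurements (Hermitian matrices E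
    with both E and I − E positive semidefinite, i.e. eigenvalues in [0,1]). -/
theorem mixed_states_sfat_lower (η : ℝ) (hη0 : 0 < η) (hη2 : η < 2) :
    ∃ c : ℝ, 0 < c ∧ ∃ n₀ : ℕ, ∀ n : ℕ, n₀ ≤ n →
      ∀ N : ℕ, N = 2 ^ n → ∀ δ : ℝ, δ = (2 : ℝ) ^ (-(n : ℝ) / η) →
        ∃ D : ℕ, (D : ℝ) ≥ c * n * δ ^ (-η) ∧
          ∃ E : Fin D → Matrix (Fin N) (Fin N) ℂ,
            (∀ t : Fin D, (E t).IsHermitian ∧ (E t).PosSemidef ∧ (1 - E t).PosSemidef) ∧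
            ∃ v : (t : Fin D) → (Fin t.1 → ℝ) → ℝ,
              ∀ ε : Fin D → ℝ, (∀ t, ε t = 1 ∨ ε t = -1) →
                ∃ ρ : Matrix (Fin N) (Fin N) ℂ, ρ.PosSemidef ∧ ρ.trace = 1 ∧
                  ∀ t : Fin D,
                    ε t * ((Matrix.trace (E t * ρ)).re
                      - v t (fun s => ε ⟨s.1, s.2.trans t.2⟩)) ≥ δ := by
  set β : ℝ := (2 - η) / (2 * η) with hβ
  have hβpos : 0 < β := div_pos (by linarith) (by linarith)
  refine ⟨β/4, by positivity, Nat.ceil (8/β) + 1, ?_⟩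
  intro n hn N hN δ hδ
  subst hN
  have hn1 : 1 ≤ n := le_trans (by omega) hn
  have hηne : η ≠ 0 := ne_of_gt hη0
  have hβid : (n:ℝ)*β = (n:ℝ)/η - (n:ℝ)/2 := by
    rw [hβ]; field_simp
  have hnβ : 8 ≤ (n:ℝ) * β := by
    have h1 : (8/β : ℝ) ≤ (Nat.ceil (8/β : ℝ) : ℝ) := Nat.le_ceil _
    have h2 : ((Nat.ceil (8/β : ℝ) : ℕ) : ℝ) + 1 ≤ (n:ℝ) := by exact_mod_cast hn
    have h3 : (8/β : ℝ) ≤ (n:ℝ) := by linarith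
    calc (8:ℝ) = (8/β) * β := by field_simp
    _ ≤ (n:ℝ)*β := by nlinarith
  set F : ℕ := Nat.floor ((n:ℝ)*β) with hF
  have hF8 : 8 ≤ F := Nat.le_floor (by exact_mod_cast hnβ)
  set L : ℕ := F - 1 with hLdef
  have hL1 : 1 ≤ L := by omega
  have hLcast : (L:ℝ) = (F:ℝ) - 1 := by
    rw [hLdef]; push_cast [Nat.cast_sub (by omega : 1 ≤ F)]; ring
  have hLle : (L:ℝ) ≤ (n:ℝ)*β - 1 := by
    have := Nat.floor_le (by positivity : (0:ℝ) ≤ (n:ℝ)*β)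
    rw [← hF] at this
    linarith [hLcast]
  have hLge : (n:ℝ)*β - 2 ≤ (L:ℝ) := by
    have := Nat.lt_floor_add_one ((n:ℝ)*β)
    rw [← hF] at this
    linarith [hLcast]
  set m : ℕ := 2^n - 1 with hm
  have h2n : 1 ≤ 2^n := Nat.one_le_two_pow
  have h2n2 : 2 ≤ 2^n := by
    calc 2 = 2^1 := by norm_num
    _ ≤ 2^n := Nat.pow_le_pow_right (by norm_num) hn1
  have hm1 : 1 ≤ m := by omega
  have hmN : m + 1 = 2^n := by omega
  have hmle : m ≤ 2^n := by omega
  have hδpos : 0 < δ := by rw [hδ]; positivity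
  -- the count
  have hδval : δ ^ (-η) = (2:ℝ)^((n:ℕ):ℝ) := by
    rw [hδ, ← Real.rpow_mul (by norm_num : (0:ℝ) ≤ 2)]
    congr 1
    field_simp
  refine ⟨m * L, ?_, ?_⟩
  · -- counting
    rw [ge_iff_le, hδval, Real.rpow_natCast]
    have hP : ((2:ℝ)^n) = ((2^n : ℕ) : ℝ) := by push_cast; ring
    have hP2 : (2:ℝ) ≤ (2:ℝ)^n := by exact_mod_cast h2n2
    have hmge : (2:ℝ)^n / 2 ≤ (m:ℝ) := by
      have : (m:ℝ) = ((2^n : ℕ) : ℝ) - 1 := by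
        rw [hm]; push_cast [Nat.cast_sub h2n]; ring
      rw [this, ← hP]
      linarith
    have hLge2 : (n:ℝ)*β/2 ≤ (L:ℝ) := by linarith
    have hprod : ((2:ℝ)^n / 2) * ((n:ℝ)*β/2) ≤ (m:ℝ) * (L:ℝ) := by
      apply mul_le_mul hmge hLge2 (by nlinarith) (by positivity)
    push_cast
    nlinarith
  -- construction
  set D := m * L with hD
  have hq : ∀ t : Fin D, t.1 / L < m := by
    intro t
    exact (Nat.div_lt_iff_lt_mul hL1).mpr (by simpa [hD] using t.2)
  have hN0 : 0 < 2^n := by omega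
  set i0 : Fin (2^n) := ⟨0, hN0⟩ with hi0
  set zt : Fin D → Fin (2^n) := fun t => ⟨t.1 / L + 1, by have := hq t; omega⟩ with hzt
  have haz : ∀ t, i0 ≠ zt t := by
    intro t
    simp [hi0, hzt, Fin.ext_iff]
  refine ⟨fun t => Emat i0 (zt t), ?_, ?_⟩
  · intro t
    exact ⟨(Emat_psd i0 (zt t)).1, Emat_psd i0 (zt t), one_sub_Emat_psd i0 (zt t) (haz t)⟩
  refine ⟨fun t w => 1/2 + r0 * kk m * ∑ k : Fin (t.1 % L),
      w ⟨(t.1/L)*L + k.1, by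
        calc (t.1/L)*L + k.1 < (t.1/L)*L + t.1 % L := Nat.add_lt_add_left k.2 _
        _ = t.1 := by rw [mul_comm]; exact Nat.div_add_mod t.1 L⟩ * (1/2:ℝ)^(k.1+1), ?_⟩
  intro ε hε
  set e : ℕ → ℝ := fun s => if h : s < D then ε ⟨s, h⟩ else 1 with he_def
  have he : ∀ s, |e s| = 1 := by
    intro s
    rw [he_def]
    dsimp only
    split
    · rcases hε ⟨s, ‹_›⟩ with h|h <;> rw [h] <;> norm_num
    · norm_num
  set g : ℕ → ℝ := ccv e L with hg_def
  have hg : ∀ x, |g x| ≤ 1 := fun x => abs_ccv_le e he L x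
  refine ⟨ρv (2^n) m g, outer_psd _, ?_, ?_⟩
  · have := sum_diag_ρv (K := 2^n) m hm1 hmN.symm g hg
    simpa [Matrix.trace, Matrix.diag] using this
  intro t
  -- the measured value
  rw [re_trace_Emat_ρv m hm1 hmN.symm g hg i0 (zt t) rfl (by simp [hzt]) (haz t)]
  have hzv : (zt t).1 - 1 = t.1 / L := by simp [hzt]
  rw [hzv]
  -- rewrite the prefix function
  have hveq : (fun s : Fin t.1 => ε ⟨s.1, s.2.trans t.2⟩) = (fun s : Fin t.1 => e s.1) := by
    funext s
    simp only [he_def]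
    rw [dif_pos (s.2.trans t.2)]
  rw [hveq]
  beta_reduce
  -- the sum over Fin (t.1 % L)
  have hsum : (∑ k : Fin (t.1 % L), e ((t.1/L)*L + k.1) * (1/2:ℝ)^(k.1+1))
      = ∑ j ∈ Finset.range (t.1 % L), e ((t.1/L)*L + j) * (1/2:ℝ)^(j+1) :=
    Fin.sum_univ_eq_sum_range (fun j => e ((t.1/L)*L + j) * (1/2:ℝ)^(j+1)) (t.1 % L)
  rw [hsum]
  have hεt : ε t = e t.1 := by
    rw [he_def]
    simp only [t.2, dif_pos]
  rw [hεt]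
  have hj : t.1 % L < L := Nat.mod_lt _ hL1
  have htL : (t.1/L)*L + t.1%L = t.1 := by
    rw [mul_comm]; exact Nat.div_add_mod t.1 L
  have hcore := core_ineq e he L (t.1/L) (t.1%L) hj
  rw [htL] at hcore
  rw [show ccv e L = g from hg_def.symm] at hcore
  have hApos : 0 < r0 * kk m := by
    apply mul_pos
    · rw [r0]
      exact inv_pos.mpr (Real.sqrt_pos.mpr (by norm_num))
    · rw [kk]
      refine inv_pos.mpr (Real.sqrt_pos.mpr ?_)
      have : (1:ℝ) ≤ (m:ℝ) := by exact_mod_cast hm1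
      linarith
  have hkey : δ ≤ r0 * kk m * (1/2:ℝ)^L := by
    have hsqprod_pos : 0 < Real.sqrt 2 * Real.sqrt (2*(m:ℝ)) := by
      apply mul_pos (Real.sqrt_pos.mpr (by norm_num))
      refine Real.sqrt_pos.mpr ?_
      have : (1:ℝ) ≤ (m:ℝ) := by exact_mod_cast hm1
      linarith
    have hsqrt : Real.sqrt 2 * Real.sqrt (2*(m:ℝ)) ≤ (2:ℝ)^((n:ℝ)/2 + 1) := by
      rw [← Real.sqrt_mul (by norm_num : (0:ℝ) ≤ 2)]
      have hmr : (m:ℝ) ≤ (2:ℝ)^n := by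
        rw [show ((2:ℝ)^n) = ((2^n : ℕ) : ℝ) by push_cast; ring]
        exact_mod_cast hmle
      have hb : (2:ℝ)*(2*(m:ℝ)) ≤ (2:ℝ)^(n+2 : ℕ) := by
        calc (2:ℝ)*(2*(m:ℝ)) = 4*(m:ℝ) := by ring
        _ ≤ 4*(2:ℝ)^n := by linarith
        _ = (2:ℝ)^(n+2:ℕ) := by rw [pow_add]; ring
      calc Real.sqrt ((2:ℝ)*(2*(m:ℝ))) ≤ Real.sqrt ((2:ℝ)^(n+2:ℕ)) := Real.sqrt_le_sqrt hb
      _ = (2:ℝ)^((n:ℝ)/2+1) := by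
          rw [← Real.rpow_natCast (2:ℝ) (n+2), Real.sqrt_eq_rpow,
            ← Real.rpow_mul (by norm_num : (0:ℝ) ≤ 2)]
          congr 1
          push_cast
          ring
    have hAge : (2:ℝ)^(-((n:ℝ)/2 + 1)) ≤ r0 * kk m := by
      rw [r0, kk, ← mul_inv, Real.rpow_neg (by norm_num : (0:ℝ) ≤ 2)]
      exact inv_anti₀ hsqprod_pos hsqrt
    have hhalf : ((1:ℝ)/2)^L = (2:ℝ)^(-(L:ℝ)) := by
      rw [Real.rpow_neg (by norm_num : (0:ℝ) ≤ 2), Real.rpow_natCast, one_div, inv_pow]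
    have hexp : δ ≤ (2:ℝ)^(-((n:ℝ)/2 + 1)) * (2:ℝ)^(-(L:ℝ)) := by
      rw [hδ, ← Real.rpow_add (by norm_num : (0:ℝ) < 2)]
      apply Real.rpow_le_rpow_of_exponent_le (by norm_num : (1:ℝ) ≤ 2)
      have h1 : (L:ℝ) ≤ (n:ℝ)/η - (n:ℝ)/2 - 1 := by linarith [hβid, hLle]
      have hnd : (-(n:ℝ))/η = -((n:ℝ)/η) := neg_div _ _
      linarith
    calc δ ≤ (2:ℝ)^(-((n:ℝ)/2 + 1)) * (2:ℝ)^(-(L:ℝ)) := hexp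
    _ ≤ (r0 * kk m) * (2:ℝ)^(-(L:ℝ)) := by
        apply mul_le_mul_of_nonneg_right hAge (Real.rpow_nonneg (by norm_num) _)
    _ = r0 * kk m * (1/2:ℝ)^L := by rw [hhalf]
  calc δ ≤ r0 * kk m * (1/2:ℝ)^L := hkey
  _ ≤ r0 * kk m * (e t.1 * (g (t.1/L)
        - ∑ j ∈ Finset.range (t.1 % L), e ((t.1/L)*L + j) * (1/2:ℝ)^(j+1))) := by
      apply mul_le_mul_of_nonneg_left hcore hApos.le
  _ = e t.1 * (1/2 + r0 * kk m * g (t.1/L)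
        - (1/2 + r0 * kk m * ∑ j ∈ Finset.range (t.1 % L),
            e ((t.1/L)*L + j) * (1/2:ℝ)^(j+1))) := by
      ring
end

section
/- For every η with 0 < η < 2 there exist a constant c > 0 and n₀ ∈ ℕ such that for every n ≥ n₀ the following holds with N = 2^n and δ = 2^{−n/η}: there exist a natural number D ≥ c · n · δ^{−η}, a sequence of two-outcome measurements E^{(1)},…,E^{(D)} on ℂ^N (N×N Hermitian matrices with eigenvalues in [0,1]), and functions v_t : {−1,1}^{t−1} → ℝ (t = 1,…,D), such that for every sign sequence ε ∈ {−1,1}^D there exists a unit vector ψ ∈ ℂ^N with ε_t · (Re⟨ψ, E^{(t)}ψ⟩ − v_t(ε_1,…,ε_{t−1})) ≥ δ for all t ∈ {1,…,D}. In words: the sequential fat-shattering dimension of n-qubit PURE states against general two-outcome measurements at scale δ = 2^{−n/η} is Ω(n/δ^η) for every η < 2 — the same lower bound, up to the exponent η approaching 2, as for general mixed states. -/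
open Matrix ComplexOrder

noncomputable def PM {N : ℕ} (a b : Fin N) (σ : ℝ) : Matrix (Fin N) (Fin N) ℂ :=
  (1/2 : ℂ) • (1 + (σ:ℂ) • (Matrix.single a b 1 + Matrix.single b a 1))

lemma PM_herm {N : ℕ} (a b : Fin N) (σ : ℝ) : (PM a b σ).IsHermitian := by
  unfold PM Matrix.IsHermitian
  rw [conjTranspose_smul, conjTranspose_add, conjTranspose_one, conjTranspose_smul,
    conjTranspose_add]
  have h : ∀ (c d : Fin N), (Matrix.single c d (1:ℂ))ᴴ = Matrix.single d c 1 := by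
    intro c d
    ext i j
    by_cases h1 : d = i <;> by_cases h2 : c = j <;>
      simp [conjTranspose_apply, Matrix.single, h1, h2, and_comm]
  rw [h, h]
  norm_num [add_comm]

lemma PM_quad {N : ℕ} (a b : Fin N) (σ : ℝ) (x : Fin N → ℂ) :
    star x ⬝ᵥ (PM a b σ) *ᵥ x
      = (1/2) * (star x ⬝ᵥ x + (σ:ℂ) * ((starRingEnd ℂ) (x a) * x b
          + (starRingEnd ℂ) (x b) * x a)) := by
  simp only [PM, smul_mulVec, add_mulVec, one_mulVec, single_mulVec,
    dotProduct_smul, dotProduct_add, smul_eq_mul]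
  have h1 : ∀ (i : Fin N) (c : ℂ), star x ⬝ᵥ Function.update (0 : Fin N → ℂ) i c
      = (starRingEnd ℂ) (x i) * c := by
    intro i c
    have : Function.update (0 : Fin N → ℂ) i c = Pi.single i c := rfl
    rw [this, dotProduct_single]
    rfl
  rw [h1, h1]
  ring

lemma star_dot {N : ℕ} (x : Fin N → ℂ) :
    star x ⬝ᵥ x = ((∑ i, ‖x i‖^2 : ℝ) : ℂ) := by
  simp [dotProduct, Pi.star_apply, Complex.mul_conj', mul_comm]

lemma PM_psd {N : ℕ} (a b : Fin N) (hab : a ≠ b) (σ : ℝ) (hσ : |σ| ≤ 1) :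
    (PM a b σ).PosSemidef := by
  refine PosSemidef.of_dotProduct_mulVec_nonneg (PM_herm a b σ) (fun x => ?_)
  rw [PM_quad, star_dot]
  set w : ℂ := (starRingEnd ℂ) (x a) * x b with hw
  have hconj : (starRingEnd ℂ) (x b) * x a = (starRingEnd ℂ) w := by
    simp [hw, mul_comm]
  rw [hconj]
  rw [Complex.add_conj]
  have : ((1:ℂ)/2) * ((∑ i, ‖x i‖^2 : ℝ) + (σ:ℂ) * ((2 * w.re : ℝ):ℂ))
      = (((1/2) * ((∑ i, ‖x i‖^2) + σ * (2 * w.re)) : ℝ) : ℂ) := by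
    push_cast; ring
  rw [this]
  rw [Complex.zero_le_real]
  have hwre : |2 * w.re| ≤ ‖x a‖^2 + ‖x b‖^2 := by
    have h3 : |w.re| ≤ ‖w‖ := Complex.abs_re_le_norm w
    have h4 : ‖w‖ = ‖x a‖ * ‖x b‖ := by simp [hw]
    have h5 : |2 * w.re| = 2 * |w.re| := by rw [abs_mul]; norm_num
    nlinarith [sq_nonneg (‖x a‖ - ‖x b‖)]
  have hsub : ‖x a‖^2 + ‖x b‖^2 ≤ ∑ i, ‖x i‖^2 := by
    have := Finset.sum_le_sum_of_subset_of_nonneg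
      (Finset.subset_univ {a, b}) (fun i _ _ => sq_nonneg ‖x i‖)
    rwa [Finset.sum_pair hab] at this
  have h6 : |σ * (2 * w.re)| ≤ ∑ i, ‖x i‖^2 := by
    rw [abs_mul]
    calc |σ| * |2 * w.re| ≤ 1 * (‖x a‖^2 + ‖x b‖^2) :=
          mul_le_mul hσ hwre (abs_nonneg _) zero_le_one
      _ = ‖x a‖^2 + ‖x b‖^2 := one_mul _
      _ ≤ _ := hsub
  nlinarith [neg_abs_le (σ * (2 * w.re))]

lemma PM_one_sub {N : ℕ} (a b : Fin N) : 1 - PM a b 1 = PM a b (-1) := by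
  unfold PM
  push_cast
  ext i j
  simp only [Matrix.sub_apply, Matrix.smul_apply, Matrix.add_apply, Matrix.one_apply,
    smul_eq_mul, Matrix.single, Matrix.of_apply]
  split_ifs <;> ring

lemma geo (m : ℕ) : ∑ l ∈ Finset.range m, ((1:ℝ)/2)^(l+1) = 1 - (1/2)^m := by
  induction m with
  | zero => simp
  | succ m ih => rw [Finset.sum_range_succ, ih]; ring

lemma bsearch (k j : ℕ) (hj : j < k) (e : ℕ → ℝ) (he : ∀ m, e m = 1 ∨ e m = -1) :
    e j * ((∑ l ∈ Finset.range k, e l * (1/2:ℝ)^(l+1))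
      - ∑ l ∈ Finset.range j, e l * (1/2:ℝ)^(l+1)) ≥ (1/2:ℝ)^k := by
  rw [← Finset.sum_Ico_eq_sub _ (le_of_lt hj), Finset.sum_eq_sum_Ico_succ_bot hj]
  set R := ∑ l ∈ Finset.Ico (j+1) k, e l * (1/2:ℝ)^(l+1) with hR
  have hsq : e j * e j = 1 := by rcases he j with h | h <;> rw [h] <;> norm_num
  have hRb : |R| ≤ (1/2:ℝ)^(j+1) - (1/2)^k := by
    have h1 : |R| ≤ ∑ l ∈ Finset.Ico (j+1) k, (1/2:ℝ)^(l+1) := by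
      refine (Finset.abs_sum_le_sum_abs _ _).trans (Finset.sum_le_sum fun l _ => ?_)
      rw [abs_mul]
      rcases he l with h | h <;> rw [h] <;> simp [abs_of_nonneg, le_of_lt]
      <;> positivity
    have h2 : ∑ l ∈ Finset.Ico (j+1) k, ((1:ℝ)/2)^(l+1)
        = (1/2:ℝ)^(j+1) - (1/2)^k := by
      rw [Finset.sum_Ico_eq_sub _ hj, geo, geo]; rw [pow_succ]; ring
    linarith [h1, h2.le]
  have : e j * (e j * (1/2:ℝ)^(j+1) + R) = (1/2:ℝ)^(j+1) + e j * R := by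
    rw [mul_add, ← mul_assoc, hsq, one_mul]
  rw [this]
  have : |e j * R| ≤ (1/2:ℝ)^(j+1) - (1/2)^k := by
    rw [abs_mul]
    rcases he j with h | h <;> rw [h] <;> simpa using hRb
  have := neg_abs_le (e j * R)
  linarith

lemma ybound (k : ℕ) (e : ℕ → ℝ) (he : ∀ m, e m = 1 ∨ e m = -1) :
    |∑ l ∈ Finset.range k, e l * (1/2:ℝ)^(l+1)| ≤ 1 := by
  refine (Finset.abs_sum_le_sum_abs _ _).trans ?_
  have : ∀ l ∈ Finset.range k, |e l * (1/2:ℝ)^(l+1)| = (1/2:ℝ)^(l+1) := by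
    intro l _
    rw [abs_mul]
    rcases he l with h | h <;> rw [h] <;> simp [abs_of_nonneg] <;> positivity
  rw [Finset.sum_congr rfl this, geo]
  have : (0:ℝ) ≤ (1/2)^k := by positivity
  linarith

def extFn {d : ℕ} (f : Fin d → ℝ) : ℕ → ℝ := fun m => if h : m < d then f ⟨m, h⟩ else 1

set_option maxHeartbeats 1000000 in
/-- For every 0 < η < 2 there are c > 0 and n₀ such that for all n ≥ n₀, with
    N = 2^n and δ = 2^{−n/η}, the class of N-dimensional PURE states δ-shatters sequentially
    a sequence of D ≥ c·n·δ^{−η} two-outcome measurements (Hermitian matrices E with both E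
    and I − E positive semidefinite, i.e. eigenvalues in [0,1]): the same lower bound as for
    mixed states. -/
theorem pure_states_sfat_lower (η : ℝ) (hη0 : 0 < η) (hη2 : η < 2) :
    ∃ c : ℝ, 0 < c ∧ ∃ n₀ : ℕ, ∀ n : ℕ, n₀ ≤ n →
      ∀ N : ℕ, N = 2 ^ n → ∀ δ : ℝ, δ = (2 : ℝ) ^ (-(n : ℝ) / η) →
        ∃ D : ℕ, (D : ℝ) ≥ c * n * δ ^ (-η) ∧
          ∃ E : Fin D → Matrix (Fin N) (Fin N) ℂ,
            (∀ t : Fin D, (E t).IsHermitian ∧ (E t).PosSemidef ∧ (1 - E t).PosSemidef) ∧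
            ∃ v : (t : Fin D) → (Fin t.1 → ℝ) → ℝ,
              ∀ ε : Fin D → ℝ, (∀ t, ε t = 1 ∨ ε t = -1) →
                ∃ ψ : Fin N → ℂ, (∑ i, ‖ψ i‖ ^ 2 = 1) ∧
                  ∀ t : Fin D,
                    ε t * ((star ψ ⬝ᵥ (E t).mulVec ψ).re
                      - v t (fun s => ε ⟨s.1, s.2.trans t.2⟩)) ≥ δ := by
  have hη : η ≠ 0 := ne_of_gt hη0
  obtain ⟨α, hαdef⟩ : ∃ α : ℝ, α = 1/η - 1/2 := ⟨_, rfl⟩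
  have hα : 0 < α := by
    have h12 : (1:ℝ)/2 < 1/η := by
      rw [div_lt_div_iff₀ two_pos hη0]; linarith
    rw [hαdef]; linarith
  refine ⟨α/4, by positivity, ⌈(4:ℝ)/α⌉₊ + 2, ?_⟩
  intro n hn N hN δ hδ
  have hn2 : 2 ≤ n := by omega
  have hn4 : (4:ℝ)/α ≤ n := by
    have h1 : ⌈(4:ℝ)/α⌉₊ ≤ n := by omega
    exact (Nat.ceil_le.mp h1)
  have hαn4 : 4 ≤ α * n := by
    rw [div_le_iff₀ hα] at hn4; linarith
  have hnpos : (0:ℝ) < n := by positivity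
  -- the bit depth k
  set k : ℕ := ⌈α * n / 2⌉₊ with hkdef
  have hk0 : 0 < k := Nat.ceil_pos.mpr (by positivity)
  have hkge : α * n / 2 ≤ (k:ℝ) := Nat.le_ceil _
  have hkle : (k:ℝ) ≤ α * n - 1 := by
    have h1 : (k:ℝ) < α * n / 2 + 1 := Nat.ceil_lt_add_one (by positivity)
    nlinarith [hαn4, h1]
  -- N facts
  have hN4 : 4 ≤ N := by
    rw [hN]; calc 4 = 2^2 := rfl
      _ ≤ 2^n := Nat.pow_le_pow_right (by norm_num) hn2
  have hNr : (N:ℝ) = (2:ℝ) ^ (n:ℝ) := by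
    rw [hN]; push_cast; rw [Real.rpow_natCast]
  have hδn : δ ^ (-η) = (N:ℝ) := by
    rw [hδ, ← Real.rpow_mul (by norm_num : (0:ℝ) ≤ 2), hNr]
    congr 1
    field_simp
  have hδpos : 0 < δ := by rw [hδ]; positivity
  refine ⟨(N-2)*k, ?_, ?_⟩
  · -- dimension count
    rw [hδn]
    have hc2 : ((N-2)*k : ℕ) = ((N:ℝ)-2)*(k:ℝ) := by
      push_cast [Nat.cast_sub (by omega : 2 ≤ N)]; ring
    rw [ge_iff_le, hc2]
    have hN2 : (N:ℝ)/2 ≤ (N:ℝ) - 2 := by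
      have : (4:ℝ) ≤ N := by exact_mod_cast hN4
      linarith
    calc α/4 * n * N = ((N:ℝ)/2) * (α * n / 2) := by ring
      _ ≤ ((N:ℝ)-2) * (k:ℝ) := by
          apply mul_le_mul hN2 hkge (div_nonneg (mul_nonneg hα.le hnpos.le) two_pos.le)
          have : (0:ℝ) ≤ N := Nat.cast_nonneg N
          linarith
  set D : ℕ := (N-2)*k with hDdef
  -- amplitudes
  set ψ0 : ℝ := (2:ℝ) ^ (-(1:ℝ)/2) with hψ0def
  set s : ℝ := (2:ℝ) ^ ((-(n:ℝ)-1)/2) with hsdef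
  have hψ0pos : 0 < ψ0 := Real.rpow_pos_of_pos two_pos _
  have hspos : 0 < s := Real.rpow_pos_of_pos two_pos _
  have hp1 : ψ0^2 = 1/2 := by
    rw [hψ0def, pow_two, ← Real.rpow_add two_pos]
    norm_num
  have hp2 : s^2 = (2:ℝ)^(-(n:ℝ)-1) := by
    rw [hsdef, pow_two, ← Real.rpow_add two_pos]
    congr 1; ring
  have hp4 : s^2 * N = 1/2 := by
    rw [hp2, hNr, ← Real.rpow_add two_pos]
    have he : -(n:ℝ) - 1 + n = -1 := by ring
    rw [he, Real.rpow_neg_one]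
    norm_num
  have hhalfk : ((1:ℝ)/2)^k = (2:ℝ)^(-(k:ℝ)) := by
    rw [Real.rpow_neg (by norm_num), Real.rpow_natCast]
    rw [div_pow, one_pow, one_div]
  have hp5 : δ ≤ ψ0 * s * (1/2:ℝ)^k := by
    rw [hhalfk, hψ0def, hsdef, ← Real.rpow_add two_pos, ← Real.rpow_add two_pos, hδ]
    apply Real.rpow_le_rpow_of_exponent_le (by norm_num)
    have hexp : α * n = (n:ℝ)/η - (n:ℝ)/2 := by rw [hαdef]; ring
    rw [hexp] at hkle
    have : -(n:ℝ)/η = -((n:ℝ)/η) := by ring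
    rw [this]
    linarith
  -- coordinates
  have hcoord : ∀ t : Fin D, t.1/k + 1 < N - 1 := by
    intro t
    have ht : t.1 < (N-2)*k := t.2
    have : t.1/k < N-2 := Nat.div_lt_of_lt_mul (by rw [mul_comm]; exact ht)
    omega
  set zeroN : Fin N := ⟨0, by omega⟩ with hzdef
  set lastN : Fin N := ⟨N-1, by omega⟩ with hldef
  have hzl : zeroN ≠ lastN := by
    refine Fin.ne_of_val_ne ?_
    show (0:ℕ) ≠ N - 1
    omega
  set coord : Fin D → Fin N := fun t => ⟨t.1/k + 1, by have := hcoord t; omega⟩ with hcdef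
  have hcz : ∀ t, zeroN ≠ coord t := by
    intro t
    refine Fin.ne_of_val_ne ?_
    show (0:ℕ) ≠ t.1/k + 1
    exact (Nat.succ_ne_zero _).symm
  have hcl : ∀ t, coord t ≠ lastN := by
    intro t
    have := hcoord t
    refine Fin.ne_of_val_ne ?_
    show t.1/k + 1 ≠ N - 1
    exact Nat.ne_of_lt this
  refine ⟨fun t => PM zeroN (coord t) 1,
    fun t => ⟨PM_herm _ _ _, PM_psd _ _ (hcz t) 1 (by norm_num),
      by rw [PM_one_sub]; exact PM_psd _ _ (hcz t) (-1) (by norm_num)⟩, ?_⟩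
  refine ⟨fun t f => 1/2 + (ψ0*s) * ∑ l ∈ Finset.range (t.1 % k),
    extFn f (t.1/k*k + l) * (1/2:ℝ)^(l+1), ?_⟩
  intro ε hε
  obtain ⟨ε', hε'def⟩ : ∃ f : ℕ → ℝ, f = extFn ε := ⟨_, rfl⟩
  have hε'pm : ∀ m, ε' m = 1 ∨ ε' m = -1 := by
    intro m
    rw [hε'def]; unfold extFn
    split
    · exact hε _
    · left; rfl
  obtain ⟨y, hydef⟩ : ∃ g : ℕ → ℝ,
      g = fun i => ∑ l ∈ Finset.range k, ε' (i*k+l) * (1/2:ℝ)^(l+1) := ⟨_, rfl⟩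
  have hy1 : ∀ i, |y i| ≤ 1 := by
    intro i
    rw [hydef]
    exact ybound k _ (fun l => hε'pm _)
  obtain ⟨T, hTdef⟩ : ∃ T : ℝ,
      T = ∑ a ∈ Finset.univ \ {zeroN, lastN}, (y (a.1 - 1))^2 := ⟨_, rfl⟩
  have hT0 : 0 ≤ T := hTdef ▸ Finset.sum_nonneg fun a _ => sq_nonneg _
  have hTN : T ≤ (N:ℝ) := by
    rw [hTdef]
    calc (∑ a ∈ Finset.univ \ {zeroN, lastN}, (y (a.1 - 1))^2) ≤ ∑ a ∈ Finset.univ \ {zeroN, lastN}, (1:ℝ) := by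
          refine Finset.sum_le_sum fun a _ => ?_
          have := hy1 (a.1 - 1)
          nlinarith [abs_nonneg (y (a.1-1)), sq_abs (y (a.1-1))]
      _ = ((Finset.univ \ {zeroN, lastN}).card : ℝ) := by simp
      _ ≤ (N:ℝ) := by
          have h1 : (Finset.univ \ {zeroN, lastN}).card ≤ N := by
            calc (Finset.univ \ ({zeroN, lastN} : Finset (Fin N))).card
                ≤ (Finset.univ : Finset (Fin N)).card :=
                  Finset.card_le_card (Finset.sdiff_subset)
              _ = N := by simp
          exact_mod_cast h1
  have hr0 : 0 ≤ 1/2 - s^2*T := by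
    have := mul_le_mul_of_nonneg_left hTN (sq_nonneg s)
    linarith [hp4]
  obtain ⟨r, hrdef⟩ : ∃ r : ℝ, r = Real.sqrt (1/2 - s^2*T) := ⟨_, rfl⟩
  have hr2 : r^2 = 1/2 - s^2*T := by rw [hrdef]; exact Real.sq_sqrt hr0
  obtain ⟨ψ, hψdef⟩ : ∃ ψ : Fin N → ℂ, ψ = fun a => if a = zeroN then (ψ0:ℂ)
    else if a = lastN then (r:ℂ) else ((s * y (a.1-1) : ℝ) : ℂ) := ⟨_, rfl⟩
  have hψz : ψ zeroN = (ψ0:ℂ) := by rw [hψdef]; simp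
  have hψl : ψ lastN = (r:ℂ) := by rw [hψdef]; simp [hzl.symm]
  have hψd : ∀ a, a ≠ zeroN → a ≠ lastN → ψ a = ((s * y (a.1-1) : ℝ) : ℂ) := by
    intro a h1 h2
    rw [hψdef]; simp [h1, h2]
  have hnorm : ∑ i, ‖ψ i‖ ^ 2 = 1 := by
    rw [← Finset.sum_sdiff (Finset.subset_univ {zeroN, lastN}), Finset.sum_pair hzl]
    have h1 : ∑ a ∈ Finset.univ \ {zeroN, lastN}, ‖ψ a‖^2 = s^2 * T := by
      rw [hTdef, Finset.mul_sum]
      refine Finset.sum_congr rfl fun a ha => ?_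
      rw [Finset.mem_sdiff, Finset.mem_insert, Finset.mem_singleton] at ha
      rw [hψd a (by tauto) (by tauto), Complex.norm_real, Real.norm_eq_abs, sq_abs]
      ring
    rw [h1, hψz, hψl, Complex.norm_real, Complex.norm_real, Real.norm_eq_abs,
      Real.norm_eq_abs, sq_abs, sq_abs, hp1, hr2]
    ring
  refine ⟨ψ, hnorm, ?_⟩
  intro t
  have hjk : t.1 % k < k := Nat.mod_lt _ hk0
  have hidx : t.1/k*k + t.1%k = t.1 := by
    rw [mul_comm]
    exact Nat.div_add_mod t.1 k
  -- quadratic form value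
  have hq : star ψ ⬝ᵥ (PM zeroN (coord t) 1) *ᵥ ψ
      = (((1:ℝ)/2 + ψ0 * s * y (t.1/k) : ℝ) : ℂ) := by
    rw [PM_quad, star_dot, hnorm]
    rw [hψz, hψd (coord t) (Ne.symm (hcz t)) (hcl t)]
    have hcv : (coord t).1 - 1 = t.1/k := by simp [hcdef]
    rw [hcv, Complex.conj_ofReal, Complex.conj_ofReal]
    push_cast
    ring
  rw [hq, Complex.ofReal_re]
  -- the threshold value
  have hvsum : ∑ l ∈ Finset.range (t.1 % k),
        extFn (fun s : Fin t.1 => ε ⟨s.1, s.2.trans t.2⟩) (t.1/k*k + l) * (1/2:ℝ)^(l+1)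
      = ∑ l ∈ Finset.range (t.1 % k), ε' (t.1/k*k + l) * (1/2:ℝ)^(l+1) := by
    refine Finset.sum_congr rfl fun l hl => ?_
    rw [Finset.mem_range] at hl
    have h1 : t.1/k*k + l < t.1 := by omega
    have h2 : t.1/k*k + l < D := h1.trans t.2
    congr 1
    rw [hε'def]
    unfold extFn
    rw [dif_pos h1, dif_pos h2]
  beta_reduce
  rw [hvsum]
  have hεt : ε t = ε' t.1 := by
    rw [hε'def]; unfold extFn
    rw [dif_pos t.2]
  have hbs := bsearch k (t.1 % k) hjk (fun l => ε' (t.1/k*k + l)) (fun l => hε'pm _)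
  have hyi : y (t.1/k) = ∑ l ∈ Finset.range k, ε' (t.1/k*k+l) * (1/2:ℝ)^(l+1) := by
    rw [hydef]
  have hkey : ε t * ((1/2 + ψ0 * s * y (t.1/k))
      - (1/2 + (ψ0*s) * ∑ l ∈ Finset.range (t.1 % k), ε' (t.1/k*k + l) * (1/2:ℝ)^(l+1)))
      = (ψ0 * s) * (ε' (t.1/k*k + t.1%k) * ((y (t.1/k))
        - ∑ l ∈ Finset.range (t.1 % k), ε' (t.1/k*k + l) * (1/2:ℝ)^(l+1))) := by
    rw [hidx, ← hεt]
    ring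
  rw [ge_iff_le]
  calc δ ≤ ψ0 * s * (1/2:ℝ)^k := hp5
    _ ≤ (ψ0 * s) * (ε' (t.1/k*k + t.1%k) * ((y (t.1/k))
        - ∑ l ∈ Finset.range (t.1 % k), ε' (t.1/k*k + l) * (1/2:ℝ)^(l+1))) := by
        apply mul_le_mul_of_nonneg_left _ (by positivity)
        rw [hyi]
        exact hbs
    _ = _ := hkey.symm
end

section
/- Let N ≥ 3. For every sign sequence ε ∈ {−1,1}^{N−2} there exists a unit vector ψ ∈ ℂ^N such that for every i ∈ {1,…,N−2}: ε_i · ( Re⟨ψ, E_{0,i} ψ⟩ − (1/4 + 1/(32(N−1))) ) ≥ 1/(4√(2(N−1))). Consequently, the class of N-dimensional pure states fat-shatters (in the ordinary, non-sequential sense, with common witness value 1/4 + 1/(32(N−1))) the set of N−2 measurements {E_{0,1},…,E_{0,N−2}} at scale δ = 1/(4√(2(N−1))); in particular the δ-fat-shattering dimension of pure states scales as Ω(1/δ²). -/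
open Matrix

/-- For N ≥ 3, every sign sequence ε ∈ {−1,1}^{N−2} is realized, with common
    witness value 1/4 + 1/(32(N−1)) and margin 1/(4√(2(N−1))), by a pure state ψ ∈ ℂ^N:
    ε_i (Re⟨ψ, E_{0,i} ψ⟩ − (1/4 + 1/(32(N−1)))) ≥ 1/(4√(2(N−1))) for all i ∈ {1,…,N−2}.
    Here E_{0,j} is the matrix with entries 1/2 at positions (a,b) with a,b ∈ {0,j} and 0
    elsewhere, i.e. (1/2)(e_0e_0* + e_je_j* + e_0e_j* + e_je_0*). -/
theorem pure_states_fat_shattering (N : ℕ) (hN : 3 ≤ N)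
    (Em : ℕ → Matrix (Fin N) (Fin N) ℂ)
    (hEm : ∀ j : ℕ, ∀ a b : Fin N,
      Em j a b = if (a.1 = 0 ∨ a.1 = j) ∧ (b.1 = 0 ∨ b.1 = j) then 1 / 2 else 0) :
    ∀ ε : Fin (N - 2) → ℝ, (∀ i, ε i = 1 ∨ ε i = -1) →
      ∃ ψ : Fin N → ℂ, (∑ a, ‖ψ a‖ ^ 2 = 1) ∧
        ∀ i : Fin (N - 2),
          ε i * ((star ψ ⬝ᵥ (Em (i.1 + 1)).mulVec ψ).re
            - (1 / 4 + 1 / (32 * ((N : ℝ) - 1))))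
            ≥ 1 / (4 * Real.sqrt (2 * ((N : ℝ) - 1))) := by
  obtain ⟨M, rfl⟩ : ∃ M, N = M + 2 := ⟨N - 2, by omega⟩
  intro ε hε
  have hM : 1 ≤ M := by omega
  have hM1 : (0:ℝ) < (M:ℝ) + 1 := by positivity
  set c : ℝ := 1 / (4 * Real.sqrt ((M:ℝ) + 1)) with hc
  have hsq : (0:ℝ) < Real.sqrt ((M:ℝ) + 1) := Real.sqrt_pos.2 hM1
  have hc2 : c ^ 2 = 1 / (16 * ((M:ℝ) + 1)) := by
    rw [hc, div_pow, mul_pow, Real.sq_sqrt hM1.le]; norm_num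
  have hcpos : 0 < c := by positivity
  have hrr : (0:ℝ) ≤ 1/2 - M * c ^ 2 := by
    have h1 : (M:ℝ) * (1 / (16 * ((M:ℝ) + 1))) ≤ 1/2 := by
      rw [mul_one_div, div_le_iff₀ (by positivity)]
      push_cast; linarith
    rw [hc2]; linarith
  set r : ℝ := Real.sqrt (1/2 - M * c ^ 2) with hrdef
  have hr2 : r ^ 2 = 1/2 - M * c ^ 2 := Real.sq_sqrt hrr
  set e : ℕ → ℝ := fun k => if h : k - 1 < M then ε ⟨k - 1, h⟩ else 0 with he
  set f : ℕ → ℝ := fun k =>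
    if k = 0 then (Real.sqrt 2)⁻¹ else if k < M + 1 then e k * c else r with hf
  set ψ : Fin (M + 2) → ℂ := fun a => ((f a.1 : ℝ) : ℂ) with hψ
  have hf0 : f 0 = (Real.sqrt 2)⁻¹ := by simp [hf]
  have hfi : ∀ k (hk : k < M), f (k + 1) = ε ⟨k, by omega⟩ * c := by
    intro k hk
    simp only [hf, he]
    rw [if_neg (by omega), if_pos (by omega), dif_pos (by omega : k + 1 - 1 < M)]
    exact congrArg (· * c) (congrArg ε (Fin.ext (by simp)))
  have hflast : f (M + 1) = r := by
    simp only [hf]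
    rw [if_neg (by omega), if_neg (by omega)]
  refine ⟨ψ, ?_, ?_⟩
  · have hnorm : ∀ a : Fin (M + 2), ‖ψ a‖ ^ 2 = f a.1 ^ 2 := by
      intro a
      simp [hψ, Complex.norm_real, sq_abs]
    calc ∑ a : Fin (M + 2), ‖ψ a‖ ^ 2 = ∑ a : Fin (M + 2), f a.1 ^ 2 := by
          exact Finset.sum_congr rfl fun a _ => hnorm a
      _ = ∑ k ∈ Finset.range (M + 2), f k ^ 2 :=
          Fin.sum_univ_eq_sum_range (fun k => f k ^ 2) (M + 2)
      _ = 1 := by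
          rw [Finset.sum_range_succ, Finset.sum_range_succ']
          have hmid : ∀ k ∈ Finset.range M, f (k + 1) ^ 2 = c ^ 2 := by
            intro k hk
            rw [Finset.mem_range] at hk
            rw [hfi k hk]
            rcases hε ⟨k, by omega⟩ with h | h <;> rw [h] <;> ring
          rw [Finset.sum_congr rfl hmid, Finset.sum_const, Finset.card_range,
            hf0, hflast, nsmul_eq_mul]
          have h2 : ((Real.sqrt 2)⁻¹) ^ 2 = 1/2 := by
            rw [inv_pow, Real.sq_sqrt (by norm_num : (0:ℝ) ≤ 2)]; norm_num
          rw [h2]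
          linarith [hr2]
  · intro i
    have hi : i.1 < M := i.2
    set b0 : Fin (M + 2) := ⟨0, by omega⟩ with hb0
    set bj : Fin (M + 2) := ⟨i.1 + 1, by omega⟩ with hbj
    have key : ∀ g : Fin (M + 2) → ℂ,
        (∑ b : Fin (M + 2), (if b.1 = 0 ∨ b.1 = i.1 + 1 then g b else 0))
          = g b0 + g bj := by
      intro g
      have hne : b0 ≠ bj := by simp [hb0, hbj, Fin.ext_iff]
      have hpt : ∀ b : Fin (M + 2),
          (if b.1 = 0 ∨ b.1 = i.1 + 1 then g b else 0)
            = (if b = b0 then g b else 0) + (if b = bj then g b else 0) := by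
        intro b
        by_cases h0 : b.1 = 0
        · have h1 : b = b0 := Fin.ext h0
          have h2 : b ≠ bj := by rw [h1]; exact hne
          rw [if_pos (Or.inl h0), if_pos h1, if_neg h2, add_zero]
        · by_cases hj : b.1 = i.1 + 1
          · have h1 : b = bj := Fin.ext hj
            have h2 : b ≠ b0 := fun h => h0 (by rw [h])
            rw [if_pos (Or.inr hj), if_neg h2, if_pos h1, zero_add]
          · have h1 : b ≠ b0 := fun h => h0 (by rw [h])
            have h2 : b ≠ bj := fun h => hj (by rw [h])
            rw [if_neg (by tauto), if_neg h1, if_neg h2, add_zero]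
      rw [Finset.sum_congr rfl fun b _ => hpt b, Finset.sum_add_distrib,
        Finset.sum_ite_eq' Finset.univ b0 g, Finset.sum_ite_eq' Finset.univ bj g]
      simp
    have hmv : (Em (i.1 + 1)).mulVec ψ = fun a : Fin (M + 2) =>
        if a.1 = 0 ∨ a.1 = i.1 + 1 then (1/2) * (ψ b0 + ψ bj) else 0 := by
      funext a
      simp only [Matrix.mulVec, dotProduct, hEm]
      by_cases ha : a.1 = 0 ∨ a.1 = i.1 + 1
      · simp only [ha, true_and, ite_mul, zero_mul, if_true]
        rw [key (fun b => (1:ℂ)/2 * ψ b)]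
        ring
      · simp only [ha, false_and, if_false, zero_mul, Finset.sum_const_zero, if_neg ha]
    have hstar : ∀ a : Fin (M + 2), star ψ a = ψ a := by
      intro a
      simp [hψ, Complex.conj_ofReal]
    have hdot : star ψ ⬝ᵥ (Em (i.1 + 1)).mulVec ψ
        = (ψ b0 + ψ bj) * ((1/2) * (ψ b0 + ψ bj)) := by
      rw [hmv]
      simp only [dotProduct]
      have : ∀ b : Fin (M + 2),
          star ψ b * (if b.1 = 0 ∨ b.1 = i.1 + 1 then (1:ℂ)/2 * (ψ b0 + ψ bj) else 0)
            = (if b.1 = 0 ∨ b.1 = i.1 + 1 then ψ b * ((1:ℂ)/2 * (ψ b0 + ψ bj)) else 0) := by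
        intro b
        rw [hstar]
        split <;> ring
      rw [Finset.sum_congr rfl fun b _ => this b,
        key (fun b => ψ b * ((1:ℂ)/2 * (ψ b0 + ψ bj)))]
      ring
    have hψ0 : ψ b0 = (((Real.sqrt 2)⁻¹ : ℝ) : ℂ) := by
      simp only [hψ, hb0, hf0]
    have hεi : ε ⟨i.1, hi⟩ = ε i := by
      congr 1
    have hψj : ψ bj = ((ε i * c : ℝ) : ℂ) := by
      simp only [hψ, hbj]
      rw [hfi i.1 hi, hεi]
    set x : ℝ := (Real.sqrt 2)⁻¹ + ε i * c with hx
    have hre : (star ψ ⬝ᵥ (Em (i.1 + 1)).mulVec ψ).re = x ^ 2 / 2 := by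
      rw [hdot, hψ0, hψj]
      have : (((Real.sqrt 2)⁻¹ : ℝ) : ℂ) + ((ε i * c : ℝ) : ℂ) = ((x : ℝ) : ℂ) := by
        push_cast [hx]; ring
      rw [this]
      have : ((x:ℝ):ℂ) * ((1/2) * ((x:ℝ):ℂ)) = (((x ^ 2 / 2 : ℝ)) : ℂ) := by
        push_cast; ring
      rw [this, Complex.ofReal_re]
    rw [hre]
    have hcast : ((M:ℝ) + 2) - 1 = (M:ℝ) + 1 := by ring
    have hgoalcast : (1:ℝ) / (32 * (((M + 2 : ℕ):ℝ) - 1)) = c ^ 2 / 2 := by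
      push_cast
      rw [hc2, div_div]
      congr 1
      ring
    have hε2 : ε i ^ 2 = 1 := by rcases hε i with h | h <;> rw [h] <;> norm_num
    have hu2 : ((Real.sqrt 2)⁻¹) ^ 2 = 1/2 := by
      rw [inv_pow, Real.sq_sqrt (by norm_num : (0:ℝ) ≤ 2)]; norm_num
    have hkey : ε i * (x ^ 2 / 2 - (1 / 4 + c ^ 2 / 2)) = (Real.sqrt 2)⁻¹ * c := by
      rw [hx]
      linear_combination (ε i / 2) * hu2 + ((Real.sqrt 2)⁻¹ * c + ε i * c ^ 2 / 2) * hε2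
    have hrhs : 1 / (4 * Real.sqrt (2 * (((M + 2 : ℕ):ℝ) - 1))) = (Real.sqrt 2)⁻¹ * c := by
      push_cast
      rw [hcast, Real.sqrt_mul (by norm_num : (0:ℝ) ≤ 2), hc]
      have h2 : (0:ℝ) < Real.sqrt 2 := Real.sqrt_pos.2 (by norm_num)
      field_simp
    rw [ge_iff_le, hrhs]
    calc (Real.sqrt 2)⁻¹ * c = ε i * (x ^ 2 / 2 - (1/4 + c ^ 2 / 2)) := hkey.symm
      _ = ε i * (x ^ 2 / 2 - (1/4 + 1 / (32 * (((M + 2 : ℕ):ℝ) - 1)))) := by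
          rw [hgoalcast]
      _ ≤ _ := le_refl _
end

section
/- Let N ≥ 2. For every sign sequence ε ∈ {−1,1}^{N−1} there exists an N-dimensional density matrix ρ such that for every i ∈ {1,…,N−1}: ε_i · ( Re Tr(E_{0,i} ρ) − (1/4)(1 + 1/(N−1)) ) ≥ 1/(4√(N−1)). Consequently, the class of N-dimensional density matrices fat-shatters (in the ordinary, non-sequential sense, with common witness value (1/4)(1 + 1/(N−1))) the set of N−1 measurements {E_{0,1},…,E_{0,N−1}} at scale δ = 1/(4√(N−1)). -/
open ComplexOrder

private lemma sum_two_aux {n : ℕ} (p q : Fin n) (hpq : p ≠ q) (g : Fin n → ℂ) :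
    ∑ b, (if b = p ∨ b = q then g b else 0) = g p + g q := by
  have h : ∀ b : Fin n, (if b = p ∨ b = q then g b else 0)
      = (if b = p then g b else 0) + (if b = q then g b else 0) := by
    intro b
    by_cases h1 : b = p
    · subst h1; simp [hpq]
    · by_cases h2 : b = q <;> simp [h1, h2, Ne.symm hpq]
  simp only [h, Finset.sum_add_distrib, Finset.sum_ite_eq', Finset.mem_univ, if_true]

/-- For N ≥ 2, every sign sequence ε ∈ {−1,1}^{N−1} is realized, with common
    witness value (1/4)(1 + 1/(N−1)) and margin 1/(4√(N−1)), by an N-dimensional density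
    matrix ρ: ε_i (Re Tr(E_{0,i} ρ) − (1/4)(1 + 1/(N−1))) ≥ 1/(4√(N−1)) for all
    i ∈ {1,…,N−1}. Here E_{0,j} is the matrix with entries 1/2 at positions (a,b) with
    a,b ∈ {0,j} and 0 elsewhere, i.e. (1/2)(e_0e_0* + e_je_j* + e_0e_j* + e_je_0*). -/
theorem mixed_states_fat_shattering (N : ℕ) (hN : 2 ≤ N)
    (Em : ℕ → Matrix (Fin N) (Fin N) ℂ)
    (hEm : ∀ j : ℕ, ∀ a b : Fin N,
      Em j a b = if (a.1 = 0 ∨ a.1 = j) ∧ (b.1 = 0 ∨ b.1 = j) then 1 / 2 else 0) :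
    ∀ ε : Fin (N - 1) → ℝ, (∀ i, ε i = 1 ∨ ε i = -1) →
      ∃ ρ : Matrix (Fin N) (Fin N) ℂ, ρ.PosSemidef ∧ ρ.trace = 1 ∧
        ∀ i : Fin (N - 1),
          ε i * ((Matrix.trace (Em (i.1 + 1) * ρ)).re
            - (1 / 4) * (1 + 1 / ((N : ℝ) - 1)))
            ≥ 1 / (4 * Real.sqrt ((N : ℝ) - 1)) := by
  intro ε hε
  obtain ⟨M, rfl⟩ : ∃ M, N = M + 1 := ⟨N - 1, by omega⟩
  have hM : 1 ≤ M := by omega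
  have hM0 : (0:ℝ) < M := by exact_mod_cast hM
  set s : ℝ := Real.sqrt 2⁻¹ with hs
  set t : ℝ := (Real.sqrt (2*M))⁻¹ with ht
  have hs2 : s * s = 2⁻¹ := Real.mul_self_sqrt (by norm_num)
  have ht2 : t * t = (2*(M:ℝ))⁻¹ := by
    rw [ht, ← mul_inv, Real.mul_self_sqrt (by positivity)]
  have hst : s * t = (2 * Real.sqrt M)⁻¹ := by
    rw [hs, ht, Real.sqrt_inv, ← mul_inv]
    congr 1
    rw [← Real.sqrt_mul (by norm_num), show (2:ℝ) * (2*M) = 4 * M by ring,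
      Real.sqrt_mul (by norm_num), show (4:ℝ) = 2^2 by norm_num, Real.sqrt_sq (by norm_num)]
  have hsqM : 0 < Real.sqrt M := Real.sqrt_pos.mpr hM0
  -- the witness vector
  set u : Fin (M+1) → ℝ := fun a =>
    if a.1 = 0 then s else t * ε ⟨a.1 - 1, by have := a.isLt; omega⟩ with hu
  set ρ : Matrix (Fin (M+1)) (Fin (M+1)) ℂ :=
    Matrix.of (fun a b => ((u a * u b : ℝ) : ℂ)) with hρ
  refine ⟨ρ, ?_, ?_, ?_⟩
  · -- PSD
    set A : Matrix (Fin 1) (Fin (M+1)) ℂ := Matrix.of (fun _ b => ((u b : ℝ) : ℂ)) with hA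
    have : ρ = A.conjTranspose * A := by
      ext a b
      simp [hρ, hA, Matrix.mul_apply, Matrix.conjTranspose_apply, Fin.sum_univ_one,
        ← Complex.ofReal_mul]
    rw [this]
    exact Matrix.posSemidef_conjTranspose_mul_self A
  · -- trace 1
    have : Matrix.trace ρ = ((∑ a : Fin (M+1), u a * u a : ℝ) : ℂ) := by
      simp only [hρ, Matrix.trace, Matrix.diag_apply, Matrix.of_apply]
      norm_cast
    rw [this]
    have h0 : u 0 = s := by simp [hu]
    have hsum : ∑ a : Fin (M+1), u a * u a = 1 := by
      rw [Fin.sum_univ_succ, h0, hs2]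
      have hterm : ∀ i : Fin M, u i.succ * u i.succ = t * t := by
        intro i
        have : u i.succ = t * ε ⟨i.1, i.isLt⟩ := by
          simp [hu, Fin.succ]
        rw [this]
        rcases hε ⟨i.1, i.isLt⟩ with h | h <;> rw [h] <;> ring
      rw [Finset.sum_congr rfl (fun i _ => hterm i), Finset.sum_const, Finset.card_univ,
        Fintype.card_fin, nsmul_eq_mul, ht2]
      field_simp
      ring
    rw [hsum]; norm_num
  · intro i
    have hiM : i.1 < M := i.isLt
    set j : Fin (M+1) := ⟨i.1 + 1, by omega⟩ with hj
    have h0j : (0 : Fin (M+1)) ≠ j := by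
      simp [hj, Fin.ext_iff]
    have hEm' : ∀ a b : Fin (M+1), Em (i.1+1) a b
        = if (a = 0 ∨ a = j) ∧ (b = 0 ∨ b = j) then 1/2 else 0 := by
      intro a b
      rw [hEm]
      congr 1
      rw [hj]; simp only [Fin.ext_iff, Fin.val_zero]
    have step : ∀ a, ∑ b, Em (i.1+1) a b * ρ b a
        = if a = 0 ∨ a = j then (1/2:ℂ) * ρ 0 a + (1/2:ℂ) * ρ j a else 0 := by
      intro a
      by_cases ha : a = 0 ∨ a = j
      · rw [if_pos ha]
        have h1 : ∀ b, Em (i.1+1) a b * ρ b a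
            = if b = 0 ∨ b = j then ((1/2:ℂ) * ρ b a) else 0 := by
          intro b
          rw [hEm' a b]
          by_cases hb : b = 0 ∨ b = j <;> simp [ha, hb]
        rw [Finset.sum_congr rfl (fun b _ => h1 b),
          sum_two_aux 0 j h0j (fun b => (1/2:ℂ) * ρ b a)]
      · rw [if_neg ha]
        apply Finset.sum_eq_zero
        intro b _
        rw [hEm' a b, if_neg (by tauto), zero_mul]
    have htr : Matrix.trace (Em (i.1+1) * ρ)
        = ((1/2:ℂ) * ρ 0 0 + (1/2:ℂ) * ρ j 0) + ((1/2:ℂ) * ρ 0 j + (1/2:ℂ) * ρ j j) := by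
      rw [Matrix.trace]
      simp only [Matrix.diag_apply, Matrix.mul_apply]
      rw [Finset.sum_congr rfl (fun a _ => step a),
        sum_two_aux 0 j h0j (fun a => (1/2:ℂ) * ρ 0 a + (1/2:ℂ) * ρ j a)]
    have hu0 : u 0 = s := by simp [hu]
    have huj : u j = t * ε i := by
      simp [hu, hj]
    have hρre : (Matrix.trace (Em (i.1+1) * ρ)).re
        = (1/2) * (s*s) + (s*t) * ε i + (1/2) * ((t * ε i) * (t * ε i)) := by
      rw [htr]
      simp only [hρ, Matrix.of_apply, hu0, huj]
      push_cast
      simp [Complex.add_re, Complex.mul_re]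
      ring
    have hee : ε i * ε i = 1 := by rcases hε i with h | h <;> rw [h] <;> norm_num
    have hcast : ((M:ℝ) + 1) - 1 = M := by ring
    push_cast [hcast]
    rw [hρre]
    have hkey : (1/2) * (s*s) + (s*t) * ε i + (1/2) * ((t * ε i) * (t * ε i))
        - 1/4 * (1 + 1/(M:ℝ)) = (2 * Real.sqrt M)⁻¹ * ε i := by
      have : (t * ε i) * (t * ε i) = t * t := by rw [mul_mul_mul_comm, hee, mul_one]
      rw [this, hs2, ht2, hst]
      field_simp
      ring
    rw [hkey]
    rw [show ε i * ((2 * Real.sqrt M)⁻¹ * ε i) = (ε i * ε i) * (2 * Real.sqrt M)⁻¹ by ring,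
      hee, one_mul]
    rw [ge_iff_le, one_div, inv_le_inv₀ (by positivity) (by positivity)]
    nlinarith [hsqM]
end
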